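/- arXiv:1612.09358 — 11 statements merged into one kernel-verified Lean document; each statement's English description precedes it below -/
import Mathlib

section
/- Let (y1, y2) be a solution of the Berger boundary value problem with phi(0) ≠ 1 (where phi = exp∘y2). Then y1'(x) > 0 for all x ∈ (0,1); in particular K = exp∘y1 is strictly increasing on (0,1). -/
open Real Set

/-- Equation (E1) of the Berger Einstein ODE system:
`y1'' + (1/6)(y1')² + (1/3)(y2')² − x⁻¹(1+3x²)(1−x²)⁻¹ y1' = 0`. -/
noncomputable def BergerE1 (y1 y2 : ℝ → ℝ) (x : ℝ) : ℝ :=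
  deriv (deriv y1) x + (1/6) * (deriv y1 x)^2 + (1/3) * (deriv y2 x)^2
    - x⁻¹ * (1 + 3*x^2) * (1 - x^2)⁻¹ * deriv y1 x

/-- Equation (E2) of the Berger Einstein ODE system, with `K = exp ∘ y1`, `phi = exp ∘ y2`:
`y1'' + (1/2)(y1')² − x⁻¹(5+7x²)(1−x²)⁻¹ y1'
  + 8(1−x²)⁻²(6 − 8 K^{-1/3} phi^{-1/3} + 2 K^{-1/3} phi^{-4/3}) = 0`. -/
noncomputable def BergerE2 (y1 y2 : ℝ → ℝ) (x : ℝ) : ℝ :=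
  deriv (deriv y1) x + (1/2) * (deriv y1 x)^2
    - x⁻¹ * (5 + 7*x^2) * (1 - x^2)⁻¹ * deriv y1 x
    + 8 * ((1 - x^2)⁻¹)^2 *
      (6 - 8 * Real.exp (y1 x) ^ (-(1:ℝ)/3) * Real.exp (y2 x) ^ (-(1:ℝ)/3)
         + 2 * Real.exp (y1 x) ^ (-(1:ℝ)/3) * Real.exp (y2 x) ^ (-(4:ℝ)/3))

/-- Equation (E3) of the Berger Einstein ODE system, with `K = exp ∘ y1`, `phi = exp ∘ y2`:
`y2'' + (1/2) y1' y2' − 2x⁻¹(1+2x²)(1−x²)⁻¹ y2'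
  + 32(1−x²)⁻² K^{-1/3} phi^{-1/3}(phi⁻¹ − 1) = 0`. -/
noncomputable def BergerE3 (y1 y2 : ℝ → ℝ) (x : ℝ) : ℝ :=
  deriv (deriv y2) x + (1/2) * deriv y1 x * deriv y2 x
    - 2 * x⁻¹ * (1 + 2*x^2) * (1 - x^2)⁻¹ * deriv y2 x
    + 32 * ((1 - x^2)⁻¹)^2 * Real.exp (y1 x) ^ (-(1:ℝ)/3) * Real.exp (y2 x) ^ (-(1:ℝ)/3)
      * ((Real.exp (y2 x))⁻¹ - 1)

/-- A solution of the Berger boundary value problem: a pair `(y1, y2)` smooth on `[0,1]`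
(realized as globally smooth functions), real analytic on `(0,1]`, satisfying (E1)–(E3)
on `(0,1)`, with boundary conditions `K(1) = phi(1) = 1` (where `K = exp ∘ y1`,
`phi = exp ∘ y2`) and `y1'(0) = y2'(0) = y1'(1) = y2'(1) = 0`. -/
structure BergerBVPSolution (y1 y2 : ℝ → ℝ) : Prop where
  smooth1 : ContDiff ℝ (⊤ : ℕ∞) y1
  smooth2 : ContDiff ℝ (⊤ : ℕ∞) y2
  analytic1 : AnalyticOnNhd ℝ y1 (Ioc 0 1)
  analytic2 : AnalyticOnNhd ℝ y2 (Ioc 0 1)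
  eqE1 : ∀ x ∈ Ioo (0:ℝ) 1, BergerE1 y1 y2 x = 0
  eqE2 : ∀ x ∈ Ioo (0:ℝ) 1, BergerE2 y1 y2 x = 0
  eqE3 : ∀ x ∈ Ioo (0:ℝ) 1, BergerE3 y1 y2 x = 0
  bdryK : Real.exp (y1 1) = 1
  bdryPhi : Real.exp (y2 1) = 1
  der1_0 : deriv y1 0 = 0
  der2_0 : deriv y2 0 = 0
  der1_1 : deriv y1 1 = 0
  der2_1 : deriv y2 1 = 0

/-- for a solution of the Berger BVP with `phi(0) ≠ 1`, `y1' > 0` on `(0,1)`;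
in particular `K = exp ∘ y1` is strictly increasing on `(0,1)`. -/
theorem berger_y1_deriv_pos (y1 y2 : ℝ → ℝ)
    (hsol : BergerBVPSolution y1 y2)
    (hphi0 : Real.exp (y2 0) ≠ 1) :
    (∀ x ∈ Ioo (0:ℝ) 1, 0 < deriv y1 x) ∧
      StrictMonoOn (fun x => Real.exp (y1 x)) (Ioo (0:ℝ) 1) := by
  obtain ⟨hd1, hc1'⟩ := contDiff_infty_iff_deriv.mp hsol.smooth1
  obtain ⟨hd1', _⟩ := contDiff_infty_iff_deriv.mp hc1'
  obtain ⟨hd2, hc2'⟩ := contDiff_infty_iff_deriv.mp hsol.smooth2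
  set u := deriv y1 with hu
  set v := deriv y2 with hv
  set w : ℝ → ℝ := fun x => (1 - x^2)^2 / x * u x with hwdef
  -- derivative of w on (0,1)
  have hwd : ∀ x ∈ Ioo (0:ℝ) 1, HasDerivAt w
      (-((1 - x^2)^2 / x) * ((1/6) * (u x)^2 + (1/3) * (v x)^2)) x := by
    intro x hx
    have hx0 : x ≠ 0 := ne_of_gt hx.1
    have hx2 : (1 : ℝ) - x^2 ≠ 0 := by nlinarith [hx.1, hx.2]
    have h1 : HasDerivAt (fun x : ℝ => 1 - x^2) (-(2*x)) x := by
      simpa using (hasDerivAt_pow 2 x).const_sub 1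
    have h2 : HasDerivAt (fun x : ℝ => (1 - x^2)^2) (2 * (1 - x^2)^1 * (-(2*x))) x :=
      h1.pow 2
    have h3 : HasDerivAt (fun x : ℝ => (1 - x^2)^2 / x)
        ((2 * (1 - x^2)^1 * (-(2*x)) * x - (1 - x^2)^2 * 1) / x^2) x :=
      h2.div (hasDerivAt_id x) hx0
    have h4 : HasDerivAt u (deriv u x) x := (hd1' x).hasDerivAt
    have h5 := h3.mul h4
    convert h5 using 1
    · rfl
    · rfl
    · rfl
    have e1 := hsol.eqE1 x hx
    unfold BergerE1 at e1
    rw [← hu, ← hv] at e1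
    have hA : deriv u x = x⁻¹ * (1 + 3*x^2) * (1 - x^2)⁻¹ * u x
        - (1/6) * (u x)^2 - (1/3) * (v x)^2 := by
      rw [hu]; linarith [e1]
    rw [hA]
    field_simp
    ring
  have hucont : Continuous u := hc1'.continuous
  have hwcont : ∀ x : ℝ, x ≠ 0 → ContinuousAt w x := by
    intro x hx0
    exact ((((continuous_const.sub (continuous_pow 2)).pow 2).continuousAt).div
      continuousAt_id hx0).mul hucont.continuousAt
  -- antitone on [a,1] for a ∈ (0,1)
  have hanti : ∀ a ∈ Ioo (0:ℝ) 1, AntitoneOn w (Icc a 1) := by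
    intro a ha
    have hint : interior (Icc a 1) = Ioo a 1 := interior_Icc
    apply antitoneOn_of_deriv_nonpos (convex_Icc a 1)
    · intro x hx
      exact (hwcont x (ne_of_gt (lt_of_lt_of_le ha.1 hx.1))).continuousWithinAt
    · rw [hint]
      intro x hx
      exact ((hwd x ⟨lt_trans ha.1 hx.1, hx.2⟩).differentiableAt).differentiableWithinAt
    · rw [hint]
      intro x hx
      have hx' : x ∈ Ioo (0:ℝ) 1 := ⟨lt_trans ha.1 hx.1, hx.2⟩
      rw [(hwd x hx').deriv]
      have hμ : 0 ≤ (1 - x^2)^2 / x := div_nonneg (sq_nonneg _) hx'.1.le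
      nlinarith [sq_nonneg (u x), sq_nonneg (v x)]
  have hw1 : w 1 = 0 := by simp [hwdef]
  have hwnn : ∀ x ∈ Ioo (0:ℝ) 1, 0 ≤ w x := by
    intro a ha
    have := hanti a ha (left_mem_Icc.mpr ha.2.le) (right_mem_Icc.mpr ha.2.le) ha.2.le
    rw [hw1] at this; exact this
  have hunn : ∀ x ∈ Ioo (0:ℝ) 1, 0 ≤ u x := by
    intro x hx
    have h := hwnn x hx
    have hμ : 0 < (1 - x^2)^2 / x := by
      have h2 : (0:ℝ) < 1 - x^2 := by nlinarith [hx.1, hx.2]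
      exact div_pos (pow_pos h2 2) hx.1
    have hwx : w x = (1 - x^2)^2 / x * u x := rfl
    nlinarith [h, hμ, hwx]
  -- u never vanishes on (0,1)
  have hune : ∀ x ∈ Ioo (0:ℝ) 1, u x ≠ 0 := by
    intro x0 hx0 h0
    have hwx0 : w x0 = 0 := by simp [hwdef, h0]
    have hw0 : ∀ x ∈ Ico x0 1, w x = 0 := by
      intro x hx
      have h1 : w x ≤ w x0 := hanti x0 hx0 (left_mem_Icc.mpr hx0.2.le)
        ⟨hx.1, hx.2.le⟩ hx.1
      have h2 : 0 ≤ w x := hwnn x ⟨lt_of_lt_of_le hx0.1 hx.1, hx.2⟩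
      linarith [hwx0]
    have hv0 : ∀ x ∈ Ioo x0 1, v x = 0 := by
      intro x hx
      have hx' : x ∈ Ioo (0:ℝ) 1 := ⟨lt_trans hx0.1 hx.1, hx.2⟩
      have hev : w =ᶠ[nhds x] (fun _ => (0:ℝ)) := by
        filter_upwards [Ioo_mem_nhds hx.1 hx.2] with y hy
        exact hw0 y ⟨hy.1.le, hy.2⟩
      have hderiv0 : deriv w x = 0 := by
        rw [hev.deriv_eq]; simp
      have hformula := (hwd x hx').deriv
      rw [hderiv0] at hformula
      have hμ : 0 < (1 - x^2)^2 / x := by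
        have h2 : (0:ℝ) < 1 - x^2 := by nlinarith [hx'.1, hx'.2]
        exact div_pos (pow_pos h2 2) hx'.1
      have hux : u x = 0 := by
        have hwx : (1 - x^2)^2 / x * u x = 0 := hw0 x ⟨hx.1.le, hx.2⟩
        exact (mul_eq_zero.mp hwx).resolve_left (ne_of_gt hμ)
      rw [hux] at hformula
      have h3 : (1 - x^2)^2 / x * v x ^ 2 = 0 := by nlinarith [hformula]
      have h4 := (mul_eq_zero.mp h3).resolve_left (ne_of_gt hμ)
      exact sq_eq_zero_iff.mp h4
    -- identity theorem: v ≡ 0 on (0,1]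
    have hva : AnalyticOnNhd ℝ v (Ioc 0 1) := hsol.analytic2.deriv
    set z0 : ℝ := (x0 + 1) / 2 with hz0
    have hz0mem : z0 ∈ Ioo x0 1 := ⟨by linarith [hx0.2], by linarith [hx0.1, hx0.2]⟩
    have hz0mem' : z0 ∈ Ioc (0:ℝ) 1 := ⟨lt_trans hx0.1 hz0mem.1, hz0mem.2.le⟩
    have hev : v =ᶠ[nhds z0] 0 := by
      filter_upwards [Ioo_mem_nhds hz0mem.1 hz0mem.2] with y hy
      exact hv0 y hy
    have hvz : EqOn v 0 (Ioc 0 1) :=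
      hva.eqOn_zero_of_preconnected_of_eventuallyEq_zero isPreconnected_Ioc hz0mem' hev
    -- then y2 is constant on [0,1]
    have hder0 : ∀ x ∈ interior (Icc (0:ℝ) 1), deriv y2 x = 0 := by
      rw [interior_Icc]
      intro x hx
      exact hvz ⟨hx.1, hx.2.le⟩
    have hmono : MonotoneOn y2 (Icc 0 1) :=
      monotoneOn_of_deriv_nonneg (convex_Icc 0 1) hd2.continuous.continuousOn
        (hd2.differentiableOn) (fun x hx => le_of_eq (hder0 x hx).symm)
    have hanti2 : AntitoneOn y2 (Icc 0 1) :=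
      antitoneOn_of_deriv_nonpos (convex_Icc 0 1) hd2.continuous.continuousOn
        (hd2.differentiableOn) (fun x hx => le_of_eq (hder0 x hx))
    have h01 : y2 0 = y2 1 := le_antisymm
      (hmono (left_mem_Icc.mpr zero_le_one) (right_mem_Icc.mpr zero_le_one) zero_le_one)
      (hanti2 (left_mem_Icc.mpr zero_le_one) (right_mem_Icc.mpr zero_le_one) zero_le_one)
    have hy21 : y2 1 = 0 := by
      have : Real.exp (y2 1) = Real.exp 0 := by rw [Real.exp_zero]; exact hsol.bdryPhi
      exact Real.exp_eq_exp.mp this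
    apply hphi0
    rw [h01, hy21, Real.exp_zero]
  have hupos : ∀ x ∈ Ioo (0:ℝ) 1, 0 < u x :=
    fun x hx => lt_of_le_of_ne (hunn x hx) (Ne.symm (hune x hx))
  refine ⟨hupos, ?_⟩
  apply strictMonoOn_of_deriv_pos (convex_Ioo 0 1)
  · exact (Real.continuous_exp.comp hd1.continuous).continuousOn
  · rw [interior_Ioo]
    intro x hx
    have hde : HasDerivAt (fun x => Real.exp (y1 x)) (Real.exp (y1 x) * deriv y1 x) x :=
      (hd1 x).hasDerivAt.exp
    rw [hde.deriv]
    exact mul_pos (Real.exp_pos _) (hupos x hx)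
end

section
/- Let (y1, y2) be a solution of the Berger boundary value problem with phi(0) ≠ 1 (where phi = exp∘y2). If phi(0) < 1, then y2'(x) > 0 and phi(0) < phi(x) < 1 for all x ∈ (0,1); if phi(0) > 1, then y2'(x) < 0 and 1 < phi(x) < phi(0) for all x ∈ (0,1). In particular phi is strictly monotone on (0,1). -/
open Real Set

open MeasureTheory intervalIntegral Topology Filter

lemma bergerKeyAbstract (u w G : ℝ → ℝ)
    (hu_cont : Continuous u)
    (hu_an : AnalyticOnNhd ℝ u (Ioc 0 1))
    (hu_diff : ∀ x ∈ Ioo (0:ℝ) 1, DifferentiableAt ℝ u x)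
    (hGcont : ContinuousOn G {t : ℝ | t ≠ 0})
    (hGpos : ∀ t ∈ Ioo (0:ℝ) 1, u t < 0 → 0 < G t)
    (hGneg : ∀ t ∈ Ioo (0:ℝ) 1, 0 < u t → G t < 0)
    (hGzero : ∀ t ∈ Ioo (0:ℝ) 1, u t = 0 → G t = 0)
    (hG1 : G 1 = 0)
    (hw : ∀ x ∈ Ioo (0:ℝ) 1, 0 < w x)
    (hI : ∀ x ∈ Ioo (0:ℝ) 1, w x * deriv u x = ∫ t in x..1, G t)
    (h0 : u 0 < 0) (h1 : u 1 = 0) :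
    ∀ x ∈ Ioo (0:ℝ) 1, 0 < deriv u x ∧ u 0 < u x ∧ u x < 0 := by
  -- interval integrability of G on subintervals of (0,∞)
  have hGint : ∀ a b : ℝ, 0 < a → 0 < b → IntervalIntegrable G volume a b := by
    intro a b ha hb
    apply (hGcont.mono ?_).intervalIntegrable
    intro s hs
    have h1' : min a b ≤ s := hs.1
    exact ne_of_gt (lt_of_lt_of_le (lt_min ha hb) h1')
  -- Step 1 : u ≤ 0 on [0,1]
  have hle : ∀ x ∈ Icc (0:ℝ) 1, u x ≤ 0 := by
    by_contra hcon
    push_neg at hcon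
    obtain ⟨xs, hxs, hxspos⟩ := hcon
    obtain ⟨c, hc, hmax⟩ := isCompact_Icc.exists_isMaxOn (nonempty_Icc.2 zero_le_one)
      hu_cont.continuousOn
    have hMpos : 0 < u c := lt_of_lt_of_le hxspos (hmax hxs)
    have hc0 : c ≠ 0 := by intro h; rw [h] at hMpos; linarith
    have hc1 : c ≠ 1 := by intro h; rw [h, h1] at hMpos; linarith
    have hcIoo : c ∈ Ioo (0:ℝ) 1 :=
      ⟨lt_of_le_of_ne hc.1 (Ne.symm hc0), lt_of_le_of_ne hc.2 hc1⟩
    have hdc : deriv u c = 0 :=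
      (hmax.isLocalMax (Icc_mem_nhds hcIoo.1 hcIoo.2)).deriv_eq_zero
    set S := {x ∈ Icc (0:ℝ) c | u x ≤ 0} with hSdef
    have hS0 : (0:ℝ) ∈ S := ⟨⟨le_refl 0, hc.1⟩, h0.le⟩
    have hSbdd : BddAbove S := ⟨c, fun x hx => hx.1.2⟩
    set α := sSup S with hαdef
    have hα0 : 0 ≤ α := le_csSup hSbdd hS0
    have hαlec : α ≤ c := csSup_le ⟨0, hS0⟩ (fun x hx => hx.1.2)
    have hSclosed : IsClosed S := by
      have : S = Icc 0 c ∩ u ⁻¹' (Iic 0) := rfl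
      rw [this]
      exact isClosed_Icc.inter (isClosed_Iic.preimage hu_cont)
    have hαS : α ∈ S := hSclosed.csSup_mem ⟨0, hS0⟩ hSbdd
    have hαu : u α ≤ 0 := hαS.2
    have hαc : α < c := lt_of_le_of_ne hαlec (by intro h; rw [h] at hαu; linarith)
    have hgt : ∀ x, α < x → x ≤ c → 0 < u x := by
      intro x h1x h2x
      by_contra hle'
      push_neg at hle'
      have : x ∈ S := ⟨⟨le_trans hα0 h1x.le, h2x⟩, hle'⟩
      exact absurd (le_csSup hSbdd this) (not_le.mpr h1x)
    have hαzero : u α = 0 := by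
      rcases hαu.lt_or_eq with hneg | heq
      · exfalso
        have hev : ∀ᶠ x in 𝓝[>] α, u x < 0 :=
          nhdsWithin_le_nhds (hu_cont.continuousAt.preimage_mem_nhds (Iio_mem_nhds hneg))
        have hev2 : ∀ᶠ x in 𝓝[>] α, x < c := nhdsWithin_le_nhds (Iio_mem_nhds hαc)
        have hself : ∀ᶠ x in 𝓝[>] α, α < x := self_mem_nhdsWithin
        obtain ⟨x, hxu, hxc, hxα⟩ := (hev.and (hev2.and hself)).exists
        exact absurd (hgt x hxα hxc.le) (not_lt.mpr hxu.le)
      · exact heq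
    have hαpos : 0 < α := by
      rcases hα0.lt_or_eq with h | h
      · exact h
      · exfalso; rw [← h] at hαzero; linarith
    have hαIoo : α ∈ Ioo (0:ℝ) 1 := ⟨hαpos, lt_of_lt_of_le hαc hcIoo.2.le⟩
    -- deriv u α ≥ 0 since u increases from u α = 0 to the right
    have hder_nonneg : 0 ≤ deriv u α := by
      have hd := (hu_diff α hαIoo).hasDerivAt
      rw [hasDerivAt_iff_tendsto_slope] at hd
      have hd' : Filter.Tendsto (slope u α) (𝓝[>] α) (𝓝 (deriv u α)) :=
        hd.mono_left (nhdsWithin_mono _ (fun x hx => ne_of_gt hx))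
      refine ge_of_tendsto hd' ?_
      filter_upwards [Ioo_mem_nhdsGT_of_mem ⟨le_refl α, hαc⟩] with x hx
      have hux : 0 < u x := hgt x hx.1 hx.2.le
      rw [slope_def_field]
      have : 0 < x - α := by linarith [hx.1]
      apply le_of_lt
      apply div_pos _ this
      rw [hαzero]; linarith
    -- but the integral identity forces deriv u α < 0
    have hsplit : (∫ t in α..(1:ℝ), G t) = (∫ t in α..c, G t) + ∫ t in c..1, G t :=
      (integral_add_adjacent_intervals (hGint α c hαpos hcIoo.1)
        (hGint c 1 hcIoo.1 one_pos)).symm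
    have hIc := hI c hcIoo
    rw [hdc, mul_zero] at hIc
    have hnegint : (∫ t in α..c, G t) < 0 := by
      have hpos : 0 < ∫ t in α..c, (fun t => -G t) t := by
        apply intervalIntegral_pos_of_pos_on ((hGint α c hαpos hcIoo.1).neg)
        · intro x hx
          have hxIoo : x ∈ Ioo (0:ℝ) 1 := ⟨lt_trans hαpos hx.1, lt_trans hx.2 hcIoo.2⟩
          have := hGneg x hxIoo (hgt x hx.1 hx.2.le)
          simpa using this
        · exact hαc
      rw [intervalIntegral.integral_neg] at hpos
      linarith
    have hIα := hI α hαIoo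
    rw [hsplit, ← hIc] at hIα
    have hwα := hw α hαIoo
    nlinarith [mul_nonneg hwα.le hder_nonneg]
  -- Step 2 : u < 0 on (0,1)
  have hlt : ∀ x ∈ Ioo (0:ℝ) 1, u x < 0 := by
    intro x hx
    rcases (hle x (Ioo_subset_Icc_self hx)).lt_or_eq with h | hzero
    · exact h
    exfalso
    have hmaxloc : IsLocalMax u x := by
      filter_upwards [Icc_mem_nhds hx.1 hx.2] with t ht
      rw [hzero]; exact hle t ht
    have hdx : deriv u x = 0 := hmaxloc.deriv_eq_zero
    have hint := hI x hx
    rw [hdx, mul_zero] at hint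
    -- G is nonneg on [x,1]
    have hGnn : ∀ t ∈ Icc x 1, 0 ≤ G t := by
      intro t ht
      rcases ht.2.lt_or_eq with ht1 | ht1
      · have htIoo : t ∈ Ioo (0:ℝ) 1 := ⟨lt_of_lt_of_le hx.1 ht.1, ht1⟩
        rcases (hle t (Ioo_subset_Icc_self htIoo)).lt_or_eq with h' | h'
        · exact (hGpos t htIoo h').le
        · exact (hGzero t htIoo h').ge
      · rw [ht1, hG1]
    -- hence G ≡ 0 on (x,1)
    have hGzero' : ∀ t ∈ Ioo x 1, G t = 0 := by
      by_contra hcon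
      push_neg at hcon
      obtain ⟨t0, ht0, hGt0⟩ := hcon
      have ht0x : x < t0 := ht0.1
      have ht01 : t0 < 1 := ht0.2
      have ht0pos : (0:ℝ) < t0 := lt_trans hx.1 ht0x
      have hGt0pos : 0 < G t0 :=
        lt_of_le_of_ne (hGnn t0 ⟨ht0x.le, ht01.le⟩) (Ne.symm hGt0)
      have hGc : ContinuousAt G t0 :=
        hGcont.continuousAt (IsOpen.mem_nhds isOpen_ne (ne_of_gt ht0pos))
      have hev : ∀ᶠ t in 𝓝 t0, 0 < G t := hGc.preimage_mem_nhds (Ioi_mem_nhds hGt0pos)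
      obtain ⟨a, b, hab, habsub⟩ := mem_nhds_iff_exists_Ioo_subset.mp hev
      set a' := max a x with ha'
      set b' := min b 1 with hb'
      have ht0' : t0 ∈ Ioo a' b' := ⟨max_lt hab.1 ht0x, lt_min hab.2 ht01⟩
      have ha'pos : 0 < a' := lt_of_lt_of_le hx.1 (le_max_right a x)
      have hxa : x ≤ a' := le_max_right a x
      have hb1 : b' ≤ 1 := min_le_right b 1
      have hsplit1 : (∫ t in x..(1:ℝ), G t) =
          (∫ t in x..a', G t) + ∫ t in a'..(1:ℝ), G t :=
        (integral_add_adjacent_intervals (hGint x a' hx.1 ha'pos)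
          (hGint a' 1 ha'pos one_pos)).symm
      have hsplit2 : (∫ t in a'..(1:ℝ), G t) =
          (∫ t in a'..b', G t) + ∫ t in b'..(1:ℝ), G t :=
        (integral_add_adjacent_intervals (hGint a' b' ha'pos (lt_trans ha'pos (lt_trans ht0'.1 ht0'.2)))
          (hGint b' 1 (lt_trans ha'pos (lt_trans ht0'.1 ht0'.2)) one_pos)).symm
      have hposmid : 0 < ∫ t in a'..b', G t := by
        apply intervalIntegral_pos_of_pos_on
          (hGint a' b' ha'pos (lt_trans ha'pos (lt_trans ht0'.1 ht0'.2)))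
        · intro s hs
          exact habsub ⟨lt_of_le_of_lt (le_max_left a x) hs.1,
            lt_of_lt_of_le hs.2 (min_le_left b 1)⟩
        · exact lt_trans ht0'.1 ht0'.2
      have hnn1 : 0 ≤ ∫ t in x..a', G t := by
        apply integral_nonneg hxa
        intro s hs
        exact hGnn s ⟨hs.1, le_trans hs.2 (le_trans ht0'.1.le (le_trans ht0'.2.le hb1))⟩
      have hnn2 : 0 ≤ ∫ t in b'..(1:ℝ), G t := by
        apply integral_nonneg hb1
        intro s hs
        exact hGnn s ⟨le_trans hxa (le_trans ht0'.1.le (le_trans ht0'.2.le hs.1)), hs.2⟩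
      linarith [hint.symm]
    -- so u ≡ 0 on (x,1), and by analyticity u ≡ 0 on (0,1], contradiction
    have huz : ∀ t ∈ Ioo x 1, u t = 0 := by
      intro t ht
      have htIoo : t ∈ Ioo (0:ℝ) 1 := ⟨lt_of_lt_of_le hx.1 ht.1.le, ht.2⟩
      by_contra h'
      have hneg : u t < 0 := lt_of_le_of_ne (hle t (Ioo_subset_Icc_self htIoo)) h'
      exact absurd (hGzero' t ht) (ne_of_gt (hGpos t htIoo hneg))
    set z0 := (x + 1) / 2 with hz0
    have hz0mem : z0 ∈ Ioo x 1 := ⟨by rw [hz0]; linarith [hx.2], by rw [hz0]; linarith [hx.2]⟩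
    have hz0Ioc : z0 ∈ Ioc (0:ℝ) 1 := ⟨lt_trans hx.1 hz0mem.1, hz0mem.2.le⟩
    have hev0 : u =ᶠ[𝓝 z0] 0 := by
      filter_upwards [Ioo_mem_nhds hz0mem.1 hz0mem.2] with t ht
      exact huz t ht
    have hzero_on : EqOn u 0 (Ioc 0 1) :=
      hu_an.eqOn_zero_of_preconnected_of_eventuallyEq_zero isPreconnected_Ioc hz0Ioc hev0
    have hu0 : u 0 = 0 := by
      have htend : Filter.Tendsto u (𝓝[>] (0:ℝ)) (𝓝 (u 0)) :=
        (hu_cont.tendsto 0).mono_left nhdsWithin_le_nhds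
      have htend0 : Filter.Tendsto u (𝓝[>] (0:ℝ)) (𝓝 0) := by
        apply Filter.Tendsto.congr' _ tendsto_const_nhds
        filter_upwards [Ioo_mem_nhdsGT_of_mem ⟨le_refl (0:ℝ), one_pos⟩] with t ht
        exact (hzero_on ⟨ht.1, ht.2.le⟩).symm
      exact tendsto_nhds_unique htend htend0
    linarith
  -- Step 3 : deriv u > 0 on (0,1)
  have hd : ∀ x ∈ Ioo (0:ℝ) 1, 0 < deriv u x := by
    intro x hx
    have hint := hI x hx
    have hpos : 0 < ∫ t in x..(1:ℝ), G t := by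
      apply intervalIntegral_pos_of_pos_on (hGint x 1 hx.1 one_pos)
      · intro t ht
        have htIoo : t ∈ Ioo (0:ℝ) 1 := ⟨lt_trans hx.1 ht.1, ht.2⟩
        exact hGpos t htIoo (hlt t htIoo)
      · exact hx.2
    rw [← hint] at hpos
    have hwx := hw x hx
    by_contra hnp
    push_neg at hnp
    nlinarith [mul_nonneg hwx.le (neg_nonneg.mpr hnp)]
  -- Step 4 : strict monotonicity on [0,1] gives u 0 < u x
  have hmono : StrictMonoOn u (Icc 0 1) := by
    apply strictMonoOn_of_deriv_pos (convex_Icc 0 1) hu_cont.continuousOn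
    intro x hx
    rw [interior_Icc] at hx
    exact hd x hx
  intro x hx
  exact ⟨hd x hx, hmono (left_mem_Icc.2 zero_le_one) (Ioo_subset_Icc_self hx) hx.1,
    hlt x hx⟩

noncomputable def bergerW (y1 : ℝ → ℝ) (s : ℝ) : ℝ :=
  Real.exp (y1 s / 2) * (s^2)⁻¹ * (1 - s^2)^3

noncomputable def bergerG (y1 y2 : ℝ → ℝ) (t : ℝ) : ℝ :=
  32 * Real.exp (y1 t / 6 - y2 t / 3) * ((t^2)⁻¹ * (1 - t^2)) * (Real.exp (-y2 t) - 1)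

lemma bergerHasDeriv (y1 y2 : ℝ → ℝ)
    (hs1 : ContDiff ℝ (⊤ : ℕ∞) y1) (hs2 : ContDiff ℝ (⊤ : ℕ∞) y2)
    (hE3 : ∀ x ∈ Ioo (0:ℝ) 1, BergerE3 y1 y2 x = 0)
    {t : ℝ} (ht : t ∈ Ioo (0:ℝ) 1) :
    HasDerivAt (fun s => bergerW y1 s * deriv y2 s) (-(bergerG y1 y2 t)) t := by
  obtain ⟨ht0, ht1⟩ := ht
  have htne : t ≠ 0 := ne_of_gt ht0
  have h1t : (0:ℝ) < 1 - t^2 := by nlinarith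
  have h1tne : (1:ℝ) - t^2 ≠ 0 := ne_of_gt h1t
  have hy1d : Differentiable ℝ y1 := hs1.differentiable (by simp)
  have hy2d : Differentiable ℝ y2 := hs2.differentiable (by simp)
  have hdy2d : Differentiable ℝ (deriv y2) :=
    ((contDiff_infty_iff_deriv.mp hs2).2).differentiable (by simp)
  have hA : HasDerivAt (fun s => Real.exp (y1 s / 2))
      (Real.exp (y1 t / 2) * (deriv y1 t / 2)) t := ((hy1d t).hasDerivAt.div_const 2).exp
  have hB := (hasDerivAt_pow 2 t).inv (pow_ne_zero 2 htne)
  have hC := ((hasDerivAt_pow 2 t).const_sub 1).pow 3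
  have hD : HasDerivAt (deriv y2) (deriv (deriv y2) t) t := (hdy2d t).hasDerivAt
  have hg : HasDerivAt (fun s => Real.exp (y1 s / 2) * (s^2)⁻¹ * (1 - s^2)^3 * deriv y2 s) _ t :=
    ((hA.mul hB).mul hC).mul hD
  simp only [Pi.mul_apply, Pi.inv_apply, Pi.pow_apply] at hg
  unfold bergerW bergerG
  convert hg using 1
  have hE := hE3 t ⟨ht0, ht1⟩
  unfold BergerE3 at hE
  rw [Real.rpow_def_of_pos (Real.exp_pos _), Real.rpow_def_of_pos (Real.exp_pos _),
    Real.log_exp, Real.log_exp] at hE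
  set p := y1 t with hp
  set q := y2 t with hq
  set u1 := deriv y1 t with hu1
  set u2 := deriv y2 t with hu2
  set u3 := deriv (deriv y2) t with hu3
  have hq3 : Real.exp q = Real.exp (q/3) ^ 3 := by
    rw [show q = q/3 + q/3 + q/3 by ring, Real.exp_add, Real.exp_add]; ring
  have hp2 : Real.exp (p/2) = Real.exp (p/6) ^ 3 := by
    rw [show p/2 = p/6 + p/6 + p/6 by ring, Real.exp_add, Real.exp_add]; ring
  have hpm : Real.exp (p * (-(1:ℝ)/3)) = (Real.exp (p/6) ^ 2)⁻¹ := by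
    rw [show p * (-(1:ℝ)/3) = -(p/6 + p/6) by ring, Real.exp_neg, Real.exp_add]; ring
  have hqm : Real.exp (q * (-(1:ℝ)/3)) = (Real.exp (q/3))⁻¹ := by
    rw [show q * (-(1:ℝ)/3) = -(q/3) by ring, Real.exp_neg]
  have hqneg : Real.exp (-q) = (Real.exp (q/3) ^ 3)⁻¹ := by
    rw [Real.exp_neg, hq3]
  have hsub : Real.exp (p/6 - q/3) = Real.exp (p/6) * (Real.exp (q/3))⁻¹ := by
    rw [Real.exp_sub, div_eq_mul_inv]
  simp only [hq3, hp2, hpm, hqm, hqneg, hsub] at hE ⊢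
  set A := Real.exp (p/6) with hA'
  set B := Real.exp (q/3) with hB'
  have hA0 : A ≠ 0 := Real.exp_ne_zero _
  have hB0 : B ≠ 0 := Real.exp_ne_zero _
  have hu3eq : u3 = -(1/2*u1*u2) + 2*t⁻¹*(1+2*t^2)*(1-t^2)⁻¹*u2
      - 32*((1-t^2)⁻¹)^2 * (A^2)⁻¹ * B⁻¹ * ((B^3)⁻¹ - 1) := by linarith [hE]
  rw [hu3eq]
  field_simp
  ring

lemma bergerGcont (y1 y2 : ℝ → ℝ)
    (hs1 : ContDiff ℝ (⊤ : ℕ∞) y1) (hs2 : ContDiff ℝ (⊤ : ℕ∞) y2) :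
    ContinuousOn (bergerG y1 y2) {t : ℝ | t ≠ 0} := by
  unfold bergerG
  have hy1c : Continuous y1 := hs1.continuous
  have hy2c : Continuous y2 := hs2.continuous
  have h1 : Continuous fun t => 32 * Real.exp (y1 t / 6 - y2 t / 3) :=
    continuous_const.mul (((hy1c.div_const 6).sub (hy2c.div_const 3)).rexp)
  have h2 : ContinuousOn (fun t : ℝ => (t^2)⁻¹ * (1 - t^2)) {t : ℝ | t ≠ 0} :=
    (((continuous_pow 2).continuousOn).inv₀ (fun t ht => pow_ne_zero 2 ht)).mul
      ((continuous_const.sub (continuous_pow 2)).continuousOn)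
  have h3 : Continuous fun t => Real.exp (-y2 t) - 1 := (hy2c.neg.rexp).sub continuous_const
  exact ((h1.continuousOn.mul h2).mul h3.continuousOn)

lemma bergerI (y1 y2 : ℝ → ℝ)
    (hs1 : ContDiff ℝ (⊤ : ℕ∞) y1) (hs2 : ContDiff ℝ (⊤ : ℕ∞) y2)
    (hE3 : ∀ x ∈ Ioo (0:ℝ) 1, BergerE3 y1 y2 x = 0)
    (hd21 : deriv y2 1 = 0) :
    ∀ x ∈ Ioo (0:ℝ) 1, bergerW y1 x * deriv y2 x = ∫ t in x..1, bergerG y1 y2 t := by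
  intro x hx
  have hdy2c : Continuous (deriv y2) := hs2.continuous_deriv (by exact_mod_cast le_top)
  have hWc : ContinuousOn (fun s => bergerW y1 s * deriv y2 s) (Icc x 1) := by
    unfold bergerW
    have h1 : Continuous fun s => Real.exp (y1 s / 2) := (hs1.continuous.div_const 2).rexp
    have h2 : ContinuousOn (fun s : ℝ => (s^2)⁻¹) (Icc x 1) := by
      apply ((continuous_pow 2).continuousOn).inv₀
      intro t ht
      have : (0:ℝ) < t := lt_of_lt_of_le hx.1 ht.1
      exact pow_ne_zero 2 (ne_of_gt this)
    exact (((h1.continuousOn.mul h2).mul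
      ((continuous_const.sub (continuous_pow 2)).pow 3).continuousOn).mul
      hdy2c.continuousOn)
  have hGint : IntervalIntegrable (fun t => -(bergerG y1 y2 t)) volume x 1 := by
    apply ContinuousOn.intervalIntegrable
    apply ((bergerGcont y1 y2 hs1 hs2).mono ?_).neg
    intro s hs
    have : min x 1 ≤ s := hs.1
    exact ne_of_gt (lt_of_lt_of_le (lt_min hx.1 one_pos) this)
  have h := integral_eq_sub_of_hasDeriv_right_of_le hx.2.le hWc
    (fun t ht => (bergerHasDeriv y1 y2 hs1 hs2 hE3 ⟨lt_trans hx.1 ht.1, ht.2⟩).hasDerivWithinAt)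
    hGint
  have hg1 : bergerW y1 1 * deriv y2 1 = 0 := by rw [hd21, mul_zero]
  rw [hg1] at h
  rw [intervalIntegral.integral_neg] at h
  linarith [h]

/-- monotonicity of `phi = exp ∘ y2` for a solution of the Berger BVP
with `phi(0) ≠ 1`. -/
theorem berger_phi_monotone (y1 y2 : ℝ → ℝ)
    (hsol : BergerBVPSolution y1 y2)
    (hphi0 : Real.exp (y2 0) ≠ 1) :
    ((Real.exp (y2 0) < 1 → ∀ x ∈ Ioo (0:ℝ) 1,
        0 < deriv y2 x ∧ Real.exp (y2 0) < Real.exp (y2 x) ∧ Real.exp (y2 x) < 1) ∧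
      (1 < Real.exp (y2 0) → ∀ x ∈ Ioo (0:ℝ) 1,
        deriv y2 x < 0 ∧ 1 < Real.exp (y2 x) ∧ Real.exp (y2 x) < Real.exp (y2 0))) ∧
      (StrictMonoOn (fun x => Real.exp (y2 x)) (Ioo (0:ℝ) 1) ∨
        StrictAntiOn (fun x => Real.exp (y2 x)) (Ioo (0:ℝ) 1)) := by
  have hy2c : Continuous y2 := hsol.smooth2.continuous
  have hy2d : ∀ x ∈ Ioo (0:ℝ) 1, DifferentiableAt ℝ y2 x :=
    fun x _ => (hsol.smooth2.differentiable (by simp)) x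
  have h21 : y2 1 = 0 := by simpa using hsol.bdryPhi
  have hGc := bergerGcont y1 y2 hsol.smooth1 hsol.smooth2
  have hIbase := bergerI y1 y2 hsol.smooth1 hsol.smooth2 hsol.eqE3 hsol.der2_1
  have hw : ∀ x ∈ Ioo (0:ℝ) 1, 0 < bergerW y1 x := by
    intro x hx
    have h1t : (0:ℝ) < 1 - x^2 := by nlinarith [hx.1, hx.2]
    have hx0 : (0:ℝ) < x := hx.1
    unfold bergerW
    positivity
  have hGpos : ∀ t ∈ Ioo (0:ℝ) 1, y2 t < 0 → 0 < bergerG y1 y2 t := by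
    intro t ht hlt
    have h1t : (0:ℝ) < 1 - t^2 := by nlinarith [ht.1, ht.2]
    have ht0 : (0:ℝ) < t := ht.1
    have hexp : 0 < Real.exp (-y2 t) - 1 := by
      rw [sub_pos]
      exact Real.one_lt_exp_iff.mpr (by linarith)
    have hbase : 0 < 32 * Real.exp (y1 t / 6 - y2 t / 3) * ((t^2)⁻¹ * (1 - t^2)) := by
      positivity
    exact mul_pos hbase hexp
  have hGneg : ∀ t ∈ Ioo (0:ℝ) 1, 0 < y2 t → bergerG y1 y2 t < 0 := by
    intro t ht hlt
    have h1t : (0:ℝ) < 1 - t^2 := by nlinarith [ht.1, ht.2]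
    have ht0 : (0:ℝ) < t := ht.1
    have hexp : Real.exp (-y2 t) - 1 < 0 := by
      rw [sub_neg]
      exact Real.exp_lt_one_iff.mpr (by linarith)
    have hbase : 0 < 32 * Real.exp (y1 t / 6 - y2 t / 3) * ((t^2)⁻¹ * (1 - t^2)) := by
      positivity
    exact mul_neg_of_pos_of_neg hbase hexp
  have hGzero : ∀ t ∈ Ioo (0:ℝ) 1, y2 t = 0 → bergerG y1 y2 t = 0 := by
    intro t _ h
    unfold bergerG
    rw [h]
    norm_num
  have hG1 : bergerG y1 y2 1 = 0 := by unfold bergerG; norm_num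
  have case_neg : y2 0 < 0 →
      ∀ x ∈ Ioo (0:ℝ) 1, 0 < deriv y2 x ∧ y2 0 < y2 x ∧ y2 x < 0 := by
    intro h0
    exact bergerKeyAbstract y2 (bergerW y1) (bergerG y1 y2) hy2c hsol.analytic2 hy2d hGc
      hGpos hGneg hGzero hG1 hw hIbase h0 h21
  have case_pos : 0 < y2 0 →
      ∀ x ∈ Ioo (0:ℝ) 1, deriv y2 x < 0 ∧ 0 < y2 x ∧ y2 x < y2 0 := by
    intro h0
    have key := bergerKeyAbstract (fun x => -y2 x) (bergerW y1) (fun t => -(bergerG y1 y2 t))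
      hy2c.neg hsol.analytic2.neg (fun x hx => (hy2d x hx).neg) hGc.neg
      (fun t ht hlt => by
        have : 0 < y2 t := by simpa using hlt
        simpa using hGneg t ht this)
      (fun t ht hlt => by
        have : y2 t < 0 := by simpa using hlt
        simpa using hGpos t ht this)
      (fun t ht hz => by
        have : y2 t = 0 := by simpa using hz
        simpa using hGzero t ht this)
      (by simpa using hG1) hw
      (by
        intro x hx
        rw [deriv.fun_neg, intervalIntegral.integral_neg, ← hIbase x hx]
        ring)
      (by simpa using h0) (by simpa using h21)
    intro x hx
    obtain ⟨hd, hlo, hhi⟩ := key x hx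
    rw [deriv.fun_neg] at hd
    refine ⟨by linarith, by simpa using hhi, ?_⟩
    simp only [neg_lt_neg_iff] at hlo
    linarith [hlo]
  have hy20ne : y2 0 ≠ 0 := fun h => hphi0 (by rw [h]; exact Real.exp_zero)
  refine ⟨⟨?_, ?_⟩, ?_⟩
  · intro hlt1 x hx
    have h0 : y2 0 < 0 := Real.exp_lt_one_iff.mp hlt1
    obtain ⟨hd, hlo, hhi⟩ := case_neg h0 x hx
    exact ⟨hd, Real.exp_lt_exp.mpr hlo, Real.exp_lt_one_iff.mpr hhi⟩
  · intro h1lt x hx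
    have h0 : 0 < y2 0 := Real.one_lt_exp_iff.mp h1lt
    obtain ⟨hd, hpos, hhi⟩ := case_pos h0 x hx
    exact ⟨hd, Real.one_lt_exp_iff.mpr hpos, Real.exp_lt_exp.mpr hhi⟩
  · rcases hy20ne.lt_or_gt with h0 | h0
    · left
      have hmono : StrictMonoOn y2 (Ioo 0 1) := by
        apply strictMonoOn_of_deriv_pos (convex_Ioo 0 1) hy2c.continuousOn
        intro x hx
        rw [interior_Ioo] at hx
        exact (case_neg h0 x hx).1
      intro a ha b hb hab
      exact Real.exp_lt_exp.mpr (hmono ha hb hab)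
    · right
      have hanti : StrictAntiOn y2 (Ioo 0 1) := by
        apply strictAntiOn_of_deriv_neg (convex_Ioo 0 1) hy2c.continuousOn
        intro x hx
        rw [interior_Ioo] at hx
        exact (case_pos h0 x hx).1
      intro a ha b hb hab
      exact Real.exp_lt_exp.mpr (hanti ha hb hab)
end

section
/- Let (y11, y12) and (y21, y22) be two solutions of the Berger boundary value problem with the same initial value y12(0) = y22(0) and phi0 := exp(y12(0)) ≠ 1. Set z1 = y11 − y21 and z2 = y12 − y22. Then for any two zeroes 0 < x1 < x2 ≤ 1 of z1' such that z1' has no zero on the open interval (x1, x2), there exists a point x3 ∈ (x1, x2) such that (y12'(x3) + y22'(x3)) · z1'(x3) · z2'(x3) < 0. -/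
open Real Set

lemma berger_sign_aux (y11 y12 y21 y22 : ℝ → ℝ)
    (s11 : ContDiff ℝ (⊤ : ℕ∞) y11) (s21 : ContDiff ℝ (⊤ : ℕ∞) y21)
    (e1 : ∀ x ∈ Ioo (0:ℝ) 1, BergerE1 y11 y12 x = 0)
    (e2 : ∀ x ∈ Ioo (0:ℝ) 1, BergerE1 y21 y22 x = 0)
    (x1 x2 : ℝ) (hx1 : 0 < x1) (hx12 : x1 < x2) (hx2 : x2 ≤ 1)
    (hz1 : deriv y11 x1 - deriv y21 x1 = 0)
    (hpos : ∀ x ∈ Ioo x1 x2, 0 < deriv y11 x - deriv y21 x)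
    (hcon : ∀ x ∈ Ioo x1 x2, 0 ≤ (deriv y12 x + deriv y22 x) * (deriv y11 x - deriv y21 x) *
      (deriv y12 x - deriv y22 x)) : False := by
  have d11 : Differentiable ℝ y11 := s11.differentiable (by simp)
  have d21 : Differentiable ℝ y21 := s21.differentiable (by simp)
  have dd11 : Differentiable ℝ (deriv y11) :=
    (contDiff_infty_iff_deriv.mp s11).2.differentiable (by simp)
  have dd21 : Differentiable ℝ (deriv y21) :=
    (contDiff_infty_iff_deriv.mp s21).2.differentiable (by simp)
  set h : ℝ → ℝ := fun x => (deriv y11 x - deriv y21 x) *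
      ((1 - x^2)^2 / x * Real.exp ((1/6) * (y11 x + y21 x))) with hh_def
  have key : ∀ x ∈ Ioo x1 x2, HasDerivAt h
      (-(1/3) * (deriv y12 x + deriv y22 x) * (deriv y12 x - deriv y22 x) *
        ((1 - x^2)^2 / x * Real.exp ((1/6) * (y11 x + y21 x)))) x := by
    intro x hx
    have hx0 : 0 < x := lt_trans hx1 hx.1
    have hxlt : x < 1 := lt_of_lt_of_le hx.2 hx2
    have hxne : x ≠ 0 := ne_of_gt hx0
    have h1xpos : (0:ℝ) < 1 - x^2 := by nlinarith
    have h1x : (1:ℝ) - x^2 ≠ 0 := ne_of_gt h1xpos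
    have hw : HasDerivAt (fun y => deriv y11 y - deriv y21 y)
        (deriv (deriv y11) x - deriv (deriv y21) x) x :=
      ((dd11 x).hasDerivAt).sub ((dd21 x).hasDerivAt)
    have hq0 : HasDerivAt (fun y : ℝ => 1 - y^2) (-(2*x^1)) x := by
      simpa using (hasDerivAt_pow 2 x).const_sub 1
    have hq : HasDerivAt (fun y : ℝ => (1 - y^2)^2)
        ((2:ℕ) * (1-x^2)^(2-1) * -(2*x^1)) x := hq0.pow 2
    have hP : HasDerivAt (fun y : ℝ => (1 - y^2)^2 / y)
        (((2:ℕ) * (1-x^2)^(2-1) * -(2*x^1) * x - (1-x^2)^2 * 1) / x^2) x :=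
      hq.div (hasDerivAt_id' x) hxne
    have hE : HasDerivAt (fun y : ℝ => Real.exp ((1/6) * (y11 y + y21 y)))
        (Real.exp ((1/6) * (y11 x + y21 x)) * ((1/6) * (deriv y11 x + deriv y21 x))) x :=
      ((((d11 x).hasDerivAt).add ((d21 x).hasDerivAt)).const_mul (1/6)).exp
    have total := hw.mul (hP.mul hE)
    refine total.congr_deriv ?_
    simp only [Pi.mul_apply]
    have He1 := e1 x ⟨hx0, hxlt⟩
    have He2 := e2 x ⟨hx0, hxlt⟩
    simp only [BergerE1] at He1 He2
    have hu' : deriv (deriv y11) x =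
        x⁻¹ * (1 + 3*x^2) * (1 - x^2)⁻¹ * deriv y11 x
          - (1/6) * (deriv y11 x)^2 - (1/3) * (deriv y12 x)^2 := by linarith
    have hv' : deriv (deriv y21) x =
        x⁻¹ * (1 + 3*x^2) * (1 - x^2)⁻¹ * deriv y21 x
          - (1/6) * (deriv y21 x)^2 - (1/3) * (deriv y22 x)^2 := by linarith
    rw [hu', hv']
    field_simp
    ring
  have hPE : ∀ x ∈ Ioo x1 x2, 0 < (1 - x^2)^2 / x * Real.exp ((1/6) * (y11 x + y21 x)) := by
    intro x hx
    have hx0 : 0 < x := lt_trans hx1 hx.1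
    have hxlt : x < 1 := lt_of_lt_of_le hx.2 hx2
    have h1xpos : (0:ℝ) < 1 - x^2 := by nlinarith
    exact mul_pos (div_pos (pow_pos h1xpos 2) hx0) (Real.exp_pos _)
  have hsign : ∀ x ∈ Ioo x1 x2, deriv h x ≤ 0 := by
    intro x hx
    rw [(key x hx).deriv]
    have hAB : 0 ≤ (deriv y12 x + deriv y22 x) * (deriv y12 x - deriv y22 x) := by
      have h1 := hcon x hx
      have h2 := hpos x hx
      nlinarith
    have h3 := hPE x hx
    nlinarith
  set t := (x1 + x2) / 2 with ht_def
  have ht : t ∈ Ioo x1 x2 := ⟨by simp [ht_def]; linarith, by simp [ht_def]; linarith⟩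
  have hanti : AntitoneOn h (Icc x1 t) := by
    apply antitoneOn_of_deriv_nonpos (convex_Icc x1 t)
    · have c1 : Continuous (fun x => deriv y11 x - deriv y21 x) :=
        dd11.continuous.sub dd21.continuous
      have c3 : Continuous (fun x : ℝ => Real.exp ((1/6) * (y11 x + y21 x))) := by
        exact Real.continuous_exp.comp (continuous_const.mul (d11.continuous.add d21.continuous))
      apply c1.continuousOn.mul
      apply ContinuousOn.mul _ c3.continuousOn
      exact ContinuousOn.div (by fun_prop) continuousOn_id
        (fun x hx => ne_of_gt (lt_of_lt_of_le hx1 hx.1))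
    · rw [interior_Icc]
      intro x hx
      have hx' : x ∈ Ioo x1 x2 := ⟨hx.1, lt_trans hx.2 ht.2⟩
      exact ((key x hx').differentiableAt).differentiableWithinAt
    · rw [interior_Icc]
      intro x hx
      exact hsign x ⟨hx.1, lt_trans hx.2 ht.2⟩
  have hle : h t ≤ h x1 := hanti ⟨le_refl x1, le_of_lt ht.1⟩ ⟨le_of_lt ht.1, le_refl t⟩ (le_of_lt ht.1)
  have hhx1 : h x1 = 0 := by simp [hh_def, hz1]
  have hht : 0 < h t := mul_pos (hpos t ht) (hPE t ht)
  linarith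

/-- between two consecutive zeroes of `z1' = (y11 − y21)'` there is a
point where `(y12' + y22') z1' z2' < 0`, for two solutions of the Berger BVP with the
same `phi(0) ≠ 1`. -/
theorem berger_sign_between_zeroes (y11 y12 y21 y22 : ℝ → ℝ)
    (hsol1 : BergerBVPSolution y11 y12) (hsol2 : BergerBVPSolution y21 y22)
    (hsame : y12 0 = y22 0)
    (hne : Real.exp (y12 0) ≠ 1)
    (x1 x2 : ℝ) (hx1 : 0 < x1) (hx12 : x1 < x2) (hx2 : x2 ≤ 1)
    (hz1 : deriv (fun x => y11 x - y21 x) x1 = 0)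
    (hz2 : deriv (fun x => y11 x - y21 x) x2 = 0)
    (hno : ∀ x ∈ Ioo x1 x2, deriv (fun x => y11 x - y21 x) x ≠ 0) :
    ∃ x3 ∈ Ioo x1 x2,
      (deriv y12 x3 + deriv y22 x3) * deriv (fun x => y11 x - y21 x) x3 *
        deriv (fun x => y12 x - y22 x) x3 < 0 := by
  have d11 : Differentiable ℝ y11 := hsol1.smooth1.differentiable (by simp)
  have d21 : Differentiable ℝ y21 := hsol2.smooth1.differentiable (by simp)
  have d12 : Differentiable ℝ y12 := hsol1.smooth2.differentiable (by simp)
  have d22 : Differentiable ℝ y22 := hsol2.smooth2.differentiable (by simp)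
  have dd11 : Differentiable ℝ (deriv y11) :=
    (contDiff_infty_iff_deriv.mp hsol1.smooth1).2.differentiable (by simp)
  have dd21 : Differentiable ℝ (deriv y21) :=
    (contDiff_infty_iff_deriv.mp hsol2.smooth1).2.differentiable (by simp)
  have hde1 : ∀ x : ℝ, deriv (fun x => y11 x - y21 x) x = deriv y11 x - deriv y21 x :=
    fun x => deriv_sub (d11 x) (d21 x)
  have hde2 : ∀ x : ℝ, deriv (fun x => y12 x - y22 x) x = deriv y12 x - deriv y22 x :=
    fun x => deriv_sub (d12 x) (d22 x)
  by_contra hc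
  push_neg at hc
  simp only [hde1, hde2] at hz1 hz2 hno hc ⊢
  -- w := deriv y11 - deriv y21 is continuous and nonvanishing on Ioo x1 x2
  have hwc : Continuous (fun x => deriv y11 x - deriv y21 x) := dd11.continuous.sub dd21.continuous
  set t0 := (x1 + x2) / 2 with ht0_def
  have ht0 : t0 ∈ Ioo x1 x2 := ⟨by simp [ht0_def]; linarith, by simp [ht0_def]; linarith⟩
  have hsame_sign : ∀ x ∈ Ioo x1 x2, ∀ y ∈ Ioo x1 x2,
      0 < (deriv y11 x - deriv y21 x) * (deriv y11 y - deriv y21 y) := by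
    intro x hx y hy
    by_contra hneg
    push_neg at hneg
    have hxne := hno x hx
    have hyne := hno y hy
    have hprod : (deriv y11 x - deriv y21 x) * (deriv y11 y - deriv y21 y) < 0 :=
      lt_of_le_of_ne hneg (mul_ne_zero hxne hyne)
    have hc0 : (0:ℝ) ∈ uIcc (deriv y11 x - deriv y21 x) (deriv y11 y - deriv y21 y) := by
      rcases mul_neg_iff.mp hprod with ⟨h1, h2⟩ | ⟨h1, h2⟩
      · exact mem_uIcc.mpr (Or.inr ⟨h2.le, h1.le⟩)
      · exact mem_uIcc.mpr (Or.inl ⟨h1.le, h2.le⟩)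
    obtain ⟨c, hc1, hc2⟩ := intermediate_value_uIcc hwc.continuousOn hc0
    exact hno c ((ordConnected_Ioo.uIcc_subset hx hy) hc1) hc2
  rcases lt_or_gt_of_ne (hno t0 ht0) with hneg0 | hpos0
  · -- w < 0 on the interval: apply aux with the solutions swapped
    have hposn : ∀ x ∈ Ioo x1 x2, 0 < deriv y21 x - deriv y11 x := by
      intro x hx
      have h1 := hsame_sign x hx t0 ht0
      nlinarith
    have hconn : ∀ x ∈ Ioo x1 x2, 0 ≤ (deriv y22 x + deriv y12 x) *
        (deriv y21 x - deriv y11 x) * (deriv y22 x - deriv y12 x) := by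
      intro x hx
      have h0 := hc x hx
      have heq : (deriv y22 x + deriv y12 x) * (deriv y21 x - deriv y11 x) *
          (deriv y22 x - deriv y12 x) = (deriv y12 x + deriv y22 x) *
          (deriv y11 x - deriv y21 x) * (deriv y12 x - deriv y22 x) := by ring
      rw [heq]; exact h0
    exact (berger_sign_aux y21 y22 y11 y12 hsol2.smooth1 hsol1.smooth1 hsol2.eqE1 hsol1.eqE1
      x1 x2 hx1 hx12 hx2 (by linarith) hposn hconn).elim
  · -- w > 0 on the interval
    have hposn : ∀ x ∈ Ioo x1 x2, 0 < deriv y11 x - deriv y21 x := by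
      intro x hx
      have h1 := hsame_sign x hx t0 ht0
      nlinarith
    exact (berger_sign_aux y11 y12 y21 y22 hsol1.smooth1 hsol2.smooth1 hsol1.eqE1 hsol2.eqE1
      x1 x2 hx1 hx12 hx2 hz1 hposn hc).elim
end

section
/- Let (y11, y12) and (y21, y22) be two solutions of the Berger boundary value problem with the same initial value y12(0) = y22(0) and phi0 := exp(y12(0)) ≠ 1. Set z1 = y11 − y21 and z2 = y12 − y22, and assume that neither z1' nor z2' vanishes identically on (0,1). Then for any zero x2 ∈ (0,1] of z1' there exists ε > 0 such that for every x with x2 − ε < x < x2 one has (y12'(x) + y22'(x)) · z1'(x) · z2'(x) > 0. -/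
open Real Set Filter Topology

/-- just before any zero `x2 ∈ (0,1]` of `z1' = (y11 − y21)'`, one has
`(y12' + y22') z1' z2' > 0`, for two solutions of the Berger BVP with the same
`phi(0) ≠ 1`, provided neither `z1'` nor `z2'` vanishes identically on `(0,1)`. -/
theorem berger_sign_before_zero (y11 y12 y21 y22 : ℝ → ℝ)
    (hsol1 : BergerBVPSolution y11 y12) (hsol2 : BergerBVPSolution y21 y22)
    (hsame : y12 0 = y22 0)
    (hne : Real.exp (y12 0) ≠ 1)
    (hnz1 : ¬ ∀ x ∈ Ioo (0:ℝ) 1, deriv (fun x => y11 x - y21 x) x = 0)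
    (hnz2 : ¬ ∀ x ∈ Ioo (0:ℝ) 1, deriv (fun x => y12 x - y22 x) x = 0)
    (x2 : ℝ) (hx2 : x2 ∈ Ioc (0:ℝ) 1)
    (hz : deriv (fun x => y11 x - y21 x) x2 = 0) :
    ∃ ε > 0, ∀ x, x2 - ε < x → x < x2 →
      0 < (deriv y12 x + deriv y22 x) * deriv (fun x => y11 x - y21 x) x *
        deriv (fun x => y12 x - y22 x) x := by
  obtain ⟨hx2pos, hx2le⟩ := hx2
  have hd11 : Differentiable ℝ y11 := hsol1.smooth1.differentiable (by simp)
  have hd12 : Differentiable ℝ y12 := hsol1.smooth2.differentiable (by simp)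
  have hd21 : Differentiable ℝ y21 := hsol2.smooth1.differentiable (by simp)
  have hd22 : Differentiable ℝ y22 := hsol2.smooth2.differentiable (by simp)
  have hdd11 : Differentiable ℝ (deriv y11) :=
    ((contDiff_infty_iff_deriv.mp hsol1.smooth1).2).differentiable (by simp)
  have hdd21 : Differentiable ℝ (deriv y21) :=
    ((contDiff_infty_iff_deriv.mp hsol2.smooth1).2).differentiable (by simp)
  set A : ℝ → ℝ := fun x => deriv y11 x - deriv y21 x with hAdef
  set B : ℝ → ℝ := fun x => deriv y12 x - deriv y22 x with hBdef
  have hz1A : ∀ x, deriv (fun x => y11 x - y21 x) x = A x := fun x =>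
    deriv_sub (hd11 x) (hd21 x)
  have hz2B : ∀ x, deriv (fun x => y12 x - y22 x) x = B x := fun x =>
    deriv_sub (hd12 x) (hd22 x)
  -- A is analytic on a neighborhood of Ioc 0 1
  have hAa : AnalyticOnNhd ℝ A (Ioc 0 1) := by
    have h1 := hsol1.analytic1.deriv
    have h2 := hsol2.analytic1.deriv
    exact h1.sub h2
  have hA2 : AnalyticAt ℝ A x2 := hAa x2 ⟨hx2pos, hx2le⟩
  rw [hz1A] at hz
  -- A is not eventually zero near x2
  have hAne : ¬ (∀ᶠ z in 𝓝 x2, A z = 0) := by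
    intro h
    apply hnz1
    intro x hx
    rw [hz1A]
    have h' : A =ᶠ[𝓝 x2] 0 := h
    exact hAa.eqOn_zero_of_preconnected_of_eventuallyEq_zero isPreconnected_Ioc
      ⟨hx2pos, hx2le⟩ h' (Ioo_subset_Ioc_self hx)
  -- order of vanishing
  have hord : analyticOrderAt A x2 ≠ ⊤ := fun h => hAne (analyticOrderAt_eq_top.mp h)
  obtain ⟨n, hn⟩ : ∃ n : ℕ, analyticOrderAt A x2 = n := by
    lift analyticOrderAt A x2 to ℕ using hord with n hn
    exact ⟨n, rfl⟩
  obtain ⟨u, hu, hu0, hfac⟩ := (hA2.analyticOrderAt_eq_natCast (n := n)).mp hn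
  simp only [smul_eq_mul] at hfac
  have hn0 : n ≠ 0 := by
    intro h0
    subst h0
    have := hfac.self_of_nhds
    simp only [pow_zero, one_mul] at this
    exact hu0 (by rw [← this, hz])
  obtain ⟨m, rfl⟩ : ∃ m, n = m + 1 := ⟨n - 1, (Nat.succ_pred_eq_of_pos (Nat.pos_of_ne_zero hn0)).symm⟩
  -- the key ODE relation from subtracting the two copies of (E1)
  have key : ∀ x ∈ Ioo (0:ℝ) 1,
      x*(1-x^2) * ((deriv y12 x + deriv y22 x) * B x)
      = 3 * (-(x*(1-x^2)) * deriv A x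
          + ((1+3*x^2) - x*(1-x^2)*(deriv y11 x + deriv y21 x)/6) * A x) := by
    intro x hx
    have h1 := hsol1.eqE1 x hx
    have h2 := hsol2.eqE1 x hx
    unfold BergerE1 at h1 h2
    have hx0 : x ≠ 0 := ne_of_gt hx.1
    have hx1 : (1:ℝ) - x^2 ≠ 0 := by nlinarith [hx.1, hx.2]
    have hdA : deriv A x = deriv (deriv y11) x - deriv (deriv y21) x :=
      deriv_sub (hdd11 x) (hdd21 x)
    rw [hdA]
    simp only [hBdef, hAdef]
    field_simp at h1 h2
    linear_combination (1/6 : ℝ) * h1 - (1/6 : ℝ) * h2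
  -- derivative of the factorization, eventually near x2
  have hfac' : ∀ᶠ z in 𝓝 x2, ∀ᶠ w in 𝓝 z, A w = (w - x2)^(m+1) * u w :=
    hfac.eventually_nhds
  have hudiff : ∀ᶠ z in 𝓝 x2, AnalyticAt ℝ u z := hu.eventually_analyticAt
  have hder : ∀ᶠ z in 𝓝 x2,
      deriv A z = ((m:ℝ)+1)*(z-x2)^m * u z + (z-x2)^(m+1) * deriv u z := by
    filter_upwards [hfac', hudiff] with z hzev hud
    have hA_eq : A =ᶠ[𝓝 z] fun w => (w - x2)^(m+1) * u w := hzev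
    rw [hA_eq.deriv_eq]
    have hdu : HasDerivAt u (deriv u z) z := hud.differentiableAt.hasDerivAt
    have hp : HasDerivAt (fun w : ℝ => (w - x2)^(m+1)) (((m:ℝ)+1)*(z-x2)^m) z := by
      have := ((hasDerivAt_id z).sub_const x2).fun_pow (m+1)
      simpa using this
    have := (hp.fun_mul hdu).deriv
    rw [this]
  -- continuity facts
  have hucont : ContinuousAt u x2 := hu.continuousAt
  have hdu_cont : ContinuousAt (deriv u) x2 := by
    obtain ⟨s, hs_mem, hs⟩ := hudiff.exists_mem
    obtain ⟨t, hts, ht_open, hxt⟩ := mem_nhds_iff.mp hs_mem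
    have : AnalyticOnNhd ℝ u t := fun z hz => hs z (hts hz)
    exact (this.deriv x2 hxt).continuousAt
  have hscont : ContinuousAt (fun z => deriv y11 z + deriv y21 z) x2 :=
    ((hdd11.continuous).add (hdd21.continuous)).continuousAt
  -- define q
  set q : ℝ → ℝ := fun z => (1+3*z^2) - z*(1-z^2)*(deriv y11 z + deriv y21 z)/6 with hqdef
  have hqcont : ContinuousAt q x2 := by
    apply ContinuousAt.sub
    · fun_prop
    · exact (ContinuousAt.mul (by fun_prop) hscont).div_const 6
  -- main sign estimate on the left of x2
  have hTpos : ∀ᶠ z in 𝓝[<] x2,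
      0 < (3 * (-(z*(1-z^2)) * deriv A z + q z * A z)) * A z := by
    rcases eq_or_lt_of_le hx2le with h1 | h1
    · -- case x2 = 1
      subst h1
      set ρ : ℝ → ℝ := fun z =>
        3 * (z*(1+z)*(((m:ℝ)+1) * u z + (z-1)*deriv u z) + q z * u z) * u z with hρdef
      have hρcont : ContinuousAt ρ 1 := by
        apply ContinuousAt.mul
        · apply ContinuousAt.mul continuousAt_const
          apply ContinuousAt.add
          · exact ContinuousAt.mul (by fun_prop)
              ((continuousAt_const.mul hucont).add ((by fun_prop : ContinuousAt (fun z : ℝ => z - 1) 1).mul hdu_cont))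
          · exact hqcont.mul hucont
        · exact hucont
      have hρpos : 0 < ρ 1 := by
        have hq1 : q 1 = 4 := by simp only [hqdef]; norm_num
        have hρ1 : ρ 1 = 3 * (2*((m:ℝ)+1) + 4) * (u 1)^2 := by
          simp only [hρdef, hq1]; ring
        rw [hρ1]
        have h2 : 0 < (u 1)^2 := pow_two_pos_of_ne_zero hu0
        have hm : (0:ℝ) < 3 * (2*((m:ℝ)+1) + 4) := by positivity
        exact mul_pos hm h2
      have hev : ∀ᶠ z in 𝓝 (1:ℝ), 0 < ρ z := hρcont (Ioi_mem_nhds hρpos)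
      have hcomb : ∀ᶠ z in 𝓝 (1:ℝ),
          (3 * (-(z*(1-z^2)) * deriv A z + q z * A z)) * A z = (z-1)^(2*(m+1)) * ρ z := by
        filter_upwards [hfac, hder, hev] with z hAz hdAz _
        rw [hAz, hdAz, hρdef]
        ring
      rw [eventually_nhdsWithin_iff]
      filter_upwards [hcomb, hev] with z hzc hzρ hzlt
      rw [hzc]
      apply mul_pos _ hzρ
      have hz1 : z - 1 ≠ 0 := sub_ne_zero.mpr (ne_of_lt hzlt)
      rw [pow_mul]
      exact pow_pos (pow_two_pos_of_ne_zero hz1) _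
    · -- case x2 < 1
      set χ : ℝ → ℝ := fun z =>
        3 * (-(z*(1-z^2))*(((m:ℝ)+1) * u z + (z-x2)*deriv u z) + (z-x2) * q z * u z) * u z
        with hχdef
      have hχcont : ContinuousAt χ x2 := by
        apply ContinuousAt.mul _ hucont
        apply ContinuousAt.mul continuousAt_const
        apply ContinuousAt.add
        · exact ContinuousAt.mul (by fun_prop)
            ((continuousAt_const.mul hucont).add ((by fun_prop : ContinuousAt (fun z : ℝ => z - x2) x2).mul hdu_cont))
        · exact ((by fun_prop : ContinuousAt (fun z : ℝ => z - x2) x2).mul hqcont).mul hucont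
      have hχneg : χ x2 < 0 := by
        have : χ x2 = -(3 * (x2*(1-x2^2)) * ((m:ℝ)+1)) * (u x2)^2 := by
          simp [hχdef]; ring
        rw [this]
        have hP : 0 < x2*(1-x2^2) := by nlinarith
        have hu1 : (0:ℝ) < (u x2)^2 := pow_two_pos_of_ne_zero hu0
        have hm : (0:ℝ) < (m:ℝ)+1 := by positivity
        nlinarith [mul_pos (mul_pos hP hm) hu1]
      have hev : ∀ᶠ z in 𝓝 x2, χ z < 0 := hχcont (Iio_mem_nhds hχneg)
      have hcomb : ∀ᶠ z in 𝓝 x2,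
          (3 * (-(z*(1-z^2)) * deriv A z + q z * A z)) * A z = (z-x2)^(2*m+1) * χ z := by
        filter_upwards [hfac, hder] with z hAz hdAz
        rw [hAz, hdAz, hχdef]
        ring
      rw [eventually_nhdsWithin_iff]
      filter_upwards [hcomb, hev] with z hzc hzχ hzlt
      rw [hzc]
      have hzneg : z - x2 < 0 := sub_neg.mpr hzlt
      have hodd : Odd (2*m+1) := ⟨m, by ring⟩
      have := hodd.pow_neg hzneg
      nlinarith
  -- combine with the ODE relation
  have hmain : ∀ᶠ z in 𝓝[<] x2,
      0 < (deriv y12 z + deriv y22 z) * A z * B z := by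
    have h0 : ∀ᶠ z in 𝓝[<] x2, 0 < z :=
      eventually_nhdsWithin_of_eventually_nhds (eventually_gt_nhds hx2pos)
    have hlt : ∀ᶠ z in 𝓝[<] x2, z < x2 := eventually_mem_nhdsWithin
    filter_upwards [hTpos, h0, hlt] with z hT hz0 hzlt
    have hz1 : z < 1 := lt_of_lt_of_le hzlt hx2le
    have hk := key z ⟨hz0, hz1⟩
    have hP : 0 < z*(1-z^2) := by nlinarith
    have heq : z*(1-z^2) * ((deriv y12 z + deriv y22 z) * B z * A z)
        = (3 * (-(z*(1-z^2)) * deriv A z + q z * A z)) * A z := by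
      simp only [hqdef]
      linear_combination (A z) * hk
    have h2 : 0 < z*(1-z^2) * ((deriv y12 z + deriv y22 z) * B z * A z) := by
      rw [heq]; exact hT
    have h3 : 0 < (deriv y12 z + deriv y22 z) * B z * A z := by
      by_contra hc
      push_neg at hc
      nlinarith [mul_nonneg hP.le (neg_nonneg.mpr hc)]
    calc (0:ℝ) < (deriv y12 z + deriv y22 z) * B z * A z := h3
    _ = (deriv y12 z + deriv y22 z) * A z * B z := by ring
  obtain ⟨l, hl, hsub⟩ := mem_nhdsLT_iff_exists_Ioo_subset.mp hmain
  refine ⟨x2 - l, by simp only [sub_pos]; exact hl, fun x hxl hxu => ?_⟩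
  have hx : x ∈ Ioo l x2 := ⟨by linarith, hxu⟩
  have := hsub hx
  rw [hz1A, hz2B]
  exact this
end

section
/- Let (y1, y2) be a solution of the Berger boundary value problem with phi(0) ≠ 1 (where K = exp∘y1, phi = exp∘y2). Then the strict inequality 3 − 4 (phi(0) K(0))^{-1/3} + K(0)^{-1/3} phi(0)^{-4/3} > 0 holds at the boundary point x = 0. -/
open Real Set

open Filter Topology

/-- for a solution of the Berger BVP with `phi(0) ≠ 1`, the strict
inequality `3 − 4(phi(0) K(0))^{-1/3} + K(0)^{-1/3} phi(0)^{-4/3} > 0` holds. -/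
theorem berger_boundary_inequality (y1 y2 : ℝ → ℝ)
    (hsol : BergerBVPSolution y1 y2)
    (hphi0 : Real.exp (y2 0) ≠ 1) :
    0 < 3 - 4 * (Real.exp (y2 0) * Real.exp (y1 0)) ^ (-(1:ℝ)/3)
      + Real.exp (y1 0) ^ (-(1:ℝ)/3) * Real.exp (y2 0) ^ (-(4:ℝ)/3) := by
  have hc1 : ContDiff ℝ (⊤ : ℕ∞) y1 := hsol.smooth1
  have hc2 : ContDiff ℝ (⊤ : ℕ∞) y2 := hsol.smooth2
  have hd1 : Differentiable ℝ y1 := hc1.differentiable (by simp)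
  have hd2 : Differentiable ℝ y2 := hc2.differentiable (by simp)
  have hc1' : ContDiff ℝ (⊤ : ℕ∞) (deriv y1) := (contDiff_infty_iff_deriv.mp hc1).2
  have hd1' : Differentiable ℝ (deriv y1) := hc1'.differentiable (by simp)
  have hcd1 : Continuous (deriv y1) := hd1'.continuous
  have hcd2 : Continuous (deriv y2) :=
    ((contDiff_infty_iff_deriv.mp hc2).2).continuous
  have hcdd1 : Continuous (deriv (deriv y1)) :=
    ((contDiff_infty_iff_deriv.mp hc1').2).continuous
  set A := deriv (deriv y1) 0 with hA
  -- E1 solved for second derivative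
  have hE1' : ∀ x ∈ Ioo (0:ℝ) 1, deriv (deriv y1) x
      = x⁻¹ * (1 + 3*x^2) * (1 - x^2)⁻¹ * deriv y1 x
        - (1/6) * (deriv y1 x)^2 - (1/3) * (deriv y2 x)^2 := by
    intro x hx
    have h := hsol.eqE1 x hx
    unfold BergerE1 at h
    linarith
  set H : ℝ → ℝ := fun x => x⁻¹ * (1 - x^2)^2 * (deriv y1 x * Real.exp (y1 x / 6)) with hH
  have hHderiv : ∀ x ∈ Ioo (0:ℝ) 1, HasDerivAt H
      (-(1/3) * (x⁻¹ * (1 - x^2)^2 * ((deriv y2 x)^2 * Real.exp (y1 x / 6)))) x := by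
    intro x hx
    obtain ⟨hx0, hx1⟩ := hx
    have hxne : x ≠ 0 := ne_of_gt hx0
    have h1x : (1:ℝ) - x^2 ≠ 0 := by nlinarith
    have hInv : HasDerivAt (fun y : ℝ => y⁻¹) (-(x^2)⁻¹) x := hasDerivAt_inv hxne
    have hq0 : HasDerivAt (fun y : ℝ => 1 - y^2) (-(2*x)) x := by
      simpa using (hasDerivAt_pow 2 x).const_sub 1
    have hq : HasDerivAt (fun y : ℝ => (1 - y^2)^2)
        ((2:ℕ) * (1 - x^2)^1 * (-(2*x))) x := hq0.pow 2
    have hy1x : HasDerivAt y1 (deriv y1 x) x := (hd1 x).hasDerivAt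
    have hdy1 : HasDerivAt (deriv y1) (deriv (deriv y1) x) x := (hd1' x).hasDerivAt
    have hexp : HasDerivAt (fun y => Real.exp (y1 y / 6))
        (Real.exp (y1 x / 6) * (deriv y1 x / 6)) x := (hy1x.div_const 6).exp
    have hmain := (hInv.mul hq).mul (hdy1.mul hexp)
    refine hmain.congr_deriv ?_
    simp only [Pi.mul_apply]
    rw [hE1' x ⟨hx0, hx1⟩]
    have h2 : x^2 ≠ 0 := pow_ne_zero 2 hxne
    field_simp
    ring
  have hHcontOn : ContinuousOn H (Ioo 0 1) := fun x hx =>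
    (hHderiv x hx).differentiableAt.continuousAt.continuousWithinAt
  have hHanti : AntitoneOn H (Ioo (0:ℝ) 1) := by
    apply antitoneOn_of_deriv_nonpos (convex_Ioo 0 1) hHcontOn
    · rw [interior_Ioo]
      exact fun x hx => (hHderiv x hx).differentiableAt.differentiableWithinAt
    · intro x hx
      rw [interior_Ioo] at hx
      rw [(hHderiv x hx).deriv]
      have h1 : 0 ≤ x⁻¹ := inv_nonneg.mpr hx.1.le
      have h2 : 0 ≤ x⁻¹ * (1 - x^2)^2 * ((deriv y2 x)^2 * Real.exp (y1 x / 6)) :=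
        mul_nonneg (mul_nonneg h1 (sq_nonneg _))
          (mul_nonneg (sq_nonneg _) (Real.exp_pos _).le)
      linarith
  -- limit of H at 0⁺
  have hslope : Tendsto (fun x => deriv y1 x * x⁻¹) (𝓝[≠] (0:ℝ)) (𝓝 A) := by
    have h := hasDerivAt_iff_tendsto_slope.mp ((hd1' 0).hasDerivAt)
    refine h.congr fun x => ?_
    simp [slope_def_field, hsol.der1_0, div_eq_mul_inv]
  have hL0 : Tendsto H (𝓝[>] (0:ℝ)) (𝓝 (A * Real.exp (y1 0 / 6))) := by
    have h1 : Tendsto (fun x => deriv y1 x * x⁻¹) (𝓝[>] (0:ℝ)) (𝓝 A) :=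
      hslope.mono_left (nhdsWithin_mono 0 fun x hx => ne_of_gt hx)
    have h2 : Tendsto (fun x : ℝ => (1 - x^2)^2 * Real.exp (y1 x / 6)) (𝓝 (0:ℝ))
        (𝓝 ((1 - (0:ℝ)^2)^2 * Real.exp (y1 0 / 6))) := by
      apply Continuous.tendsto
      exact ((continuous_const.sub (continuous_pow 2)).pow 2).mul
        (Real.continuous_exp.comp (hd1.continuous.div_const 6))
    have h3 := h1.mul (h2.mono_left nhdsWithin_le_nhds)
    have hval : A * ((1 - (0:ℝ)^2)^2 * Real.exp (y1 0 / 6)) = A * Real.exp (y1 0 / 6) := by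
      norm_num
    rw [hval] at h3
    exact h3.congr fun x => by simp only [hH]; ring
  -- limit of H at 1⁻
  have hL1 : Tendsto H (𝓝[<] (1:ℝ)) (𝓝 0) := by
    have hcH : ContinuousAt H 1 := by
      have h1 : ContinuousAt (fun x : ℝ => x⁻¹) 1 := continuousAt_inv₀ one_ne_zero
      have h2 : Continuous (fun x : ℝ => (1 - x^2)^2) :=
        (continuous_const.sub (continuous_pow 2)).pow 2
      have h3 : Continuous (fun x => deriv y1 x * Real.exp (y1 x / 6)) :=
        hcd1.mul (Real.continuous_exp.comp (hd1.continuous.div_const 6))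
      exact (h1.mul h2.continuousAt).mul h3.continuousAt
    have hval : H 1 = 0 := by norm_num [hH]
    exact hval ▸ hcH.tendsto.mono_left nhdsWithin_le_nhds
  -- H is nonnegative on Ioo 0 1
  have hHnonneg : ∀ t ∈ Ioo (0:ℝ) 1, 0 ≤ H t := by
    intro t ht
    refine le_of_tendsto hL1 ?_
    filter_upwards [Ioo_mem_nhdsLT_of_mem (⟨ht.2, le_refl 1⟩ : (1:ℝ) ∈ Ioc t 1)] with s hs
    exact hHanti ht ⟨lt_trans ht.1 hs.1, hs.2⟩ hs.1.le
  -- H is dominated by the limit at 0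
  have hL0ge : ∀ t ∈ Ioo (0:ℝ) 1, H t ≤ A * Real.exp (y1 0 / 6) := by
    intro t ht
    refine ge_of_tendsto hL0 ?_
    filter_upwards [Ioo_mem_nhdsGT_of_mem (⟨le_refl 0, ht.1⟩ : (0:ℝ) ∈ Ico 0 t)] with s hs
    exact hHanti ⟨hs.1, lt_trans hs.2 ht.2⟩ ht hs.2.le
  -- a point where deriv y2 ≠ 0
  have hy21 : y2 1 = 0 := (Real.exp_eq_one_iff _).mp hsol.bdryPhi
  have hy20 : y2 0 ≠ 0 := fun h => hphi0 (by rw [h, Real.exp_zero])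
  obtain ⟨c, hc, hderiv_c⟩ := exists_deriv_eq_slope y2 one_pos
      hd2.continuous.continuousOn hd2.differentiableOn
  have hdc : deriv y2 c ≠ 0 := by
    rw [hderiv_c, hy21]
    simpa using fun h => hy20 (by linarith)
  have hopen : IsOpen ({x : ℝ | deriv y2 x ≠ 0} ∩ Ioo 0 1) :=
    (isOpen_compl_singleton.preimage hcd2).inter isOpen_Ioo
  obtain ⟨ε, hε, hball⟩ := Metric.isOpen_iff.mp hopen c ⟨hdc, hc⟩
  set c₁ := c - ε/2 with hc₁
  set c₂ := c + ε/2 with hc₂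
  have hc₁c₂ : c₁ < c₂ := by simp only [hc₁, hc₂]; linarith
  have hsub : Icc c₁ c₂ ⊆ {x : ℝ | deriv y2 x ≠ 0} ∩ Ioo 0 1 := by
    intro x hx
    apply hball
    rw [Metric.mem_ball, Real.dist_eq]
    have : |x - c| ≤ ε/2 := abs_le.mpr ⟨by simp only [hc₁] at hx ⊢; linarith [hx.1],
      by simp only [hc₂] at hx ⊢; linarith [hx.2]⟩
    linarith
  have hc₁mem : c₁ ∈ Ioo (0:ℝ) 1 := (hsub (left_mem_Icc.mpr hc₁c₂.le)).2
  have hc₂mem : c₂ ∈ Ioo (0:ℝ) 1 := (hsub (right_mem_Icc.mpr hc₁c₂.le)).2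
  have hstrict : StrictAntiOn H (Icc c₁ c₂) := by
    apply strictAntiOn_of_deriv_neg (convex_Icc _ _)
    · exact hHcontOn.mono fun x hx => (hsub hx).2
    · intro x hx
      rw [interior_Icc] at hx
      have hx' := hsub (Ioo_subset_Icc_self hx)
      rw [(hHderiv x hx'.2).deriv]
      have h1 : 0 < x⁻¹ := inv_pos.mpr hx'.2.1
      have h2 : (0:ℝ) < (1 - x^2)^2 := by
        have : (1:ℝ) - x^2 ≠ 0 := by nlinarith [hx'.2.1, hx'.2.2]
        positivity
      have h3 : 0 < (deriv y2 x)^2 :=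
        lt_of_le_of_ne (sq_nonneg _) (Ne.symm (pow_ne_zero 2 hx'.1))
      have := mul_pos (mul_pos h1 h2) (mul_pos h3 (Real.exp_pos (y1 x / 6)))
      linarith
  have h12 : H c₂ < H c₁ :=
    hstrict (left_mem_Icc.mpr hc₁c₂.le) (right_mem_Icc.mpr hc₁c₂.le) hc₁c₂
  have hApos : 0 < A := by
    have e1 : 0 ≤ H c₂ := hHnonneg c₂ hc₂mem
    have e2 : H c₁ ≤ A * Real.exp (y1 0 / 6) := hL0ge c₁ hc₁mem
    nlinarith [Real.exp_pos (y1 0 / 6)]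
  -- Now the E2 limit at 0
  have hexp_rpow : ∀ a b : ℝ, Real.exp a ^ b = Real.exp (a * b) := fun a b => by
    rw [Real.rpow_def_of_pos (Real.exp_pos a), Real.log_exp]
  have hE2' : ∀ x ∈ Ioo (0:ℝ) 1, deriv (deriv y1) x
      = (deriv y1 x * x⁻¹) * ((5 + 7*x^2) * (1 - x^2)⁻¹) - (1/2)*(deriv y1 x)^2
        - 8 * ((1 - x^2)⁻¹)^2 * (6 - 8 * Real.exp (y1 x * (-(1:ℝ)/3)) * Real.exp (y2 x * (-(1:ℝ)/3))
            + 2 * Real.exp (y1 x * (-(1:ℝ)/3)) * Real.exp (y2 x * (-(4:ℝ)/3))) := by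
    intro x hx
    have h := hsol.eqE2 x hx
    unfold BergerE2 at h
    simp only [hexp_rpow] at h
    linear_combination h
  have hEtend1 : Tendsto (fun x => deriv (deriv y1) x) (𝓝[>] (0:ℝ)) (𝓝 A) :=
    (hcdd1.tendsto 0).mono_left nhdsWithin_le_nhds
  have hinv0 : ContinuousAt (fun x : ℝ => (1 - x^2)⁻¹) 0 := by
    apply ContinuousAt.inv₀
    · exact (continuous_const.sub (continuous_pow 2)).continuousAt
    · norm_num
  have hg2 : Continuous (fun x => (6:ℝ) - 8 * Real.exp (y1 x * (-(1:ℝ)/3)) * Real.exp (y2 x * (-(1:ℝ)/3))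
      + 2 * Real.exp (y1 x * (-(1:ℝ)/3)) * Real.exp (y2 x * (-(4:ℝ)/3))) := by
    have e1 : Continuous (fun x => Real.exp (y1 x * (-(1:ℝ)/3))) :=
      Real.continuous_exp.comp (hd1.continuous.mul continuous_const)
    have e2 : Continuous (fun x => Real.exp (y2 x * (-(1:ℝ)/3))) :=
      Real.continuous_exp.comp (hd2.continuous.mul continuous_const)
    have e3 : Continuous (fun x => Real.exp (y2 x * (-(4:ℝ)/3))) :=
      Real.continuous_exp.comp (hd2.continuous.mul continuous_const)
    exact (continuous_const.sub ((continuous_const.mul e1).mul e2)).add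
      ((continuous_const.mul e1).mul e3)
  have h1 : Tendsto (fun x => deriv y1 x * x⁻¹) (𝓝[>] (0:ℝ)) (𝓝 A) :=
    hslope.mono_left (nhdsWithin_mono 0 fun x hx => ne_of_gt hx)
  have ht2 : ContinuousAt (fun x : ℝ => (5 + 7*x^2) * (1 - x^2)⁻¹) 0 :=
    ((continuous_const.add (continuous_const.mul (continuous_pow 2))).continuousAt).mul hinv0
  have ht3 : ContinuousAt (fun x : ℝ => (1/2)*(deriv y1 x)^2) 0 :=
    (continuous_const.mul (hcd1.pow 2)).continuousAt
  have ht4 : ContinuousAt (fun x : ℝ => 8 * ((1 - x^2)⁻¹)^2 *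
      ((6:ℝ) - 8 * Real.exp (y1 x * (-(1:ℝ)/3)) * Real.exp (y2 x * (-(1:ℝ)/3))
        + 2 * Real.exp (y1 x * (-(1:ℝ)/3)) * Real.exp (y2 x * (-(4:ℝ)/3)))) 0 :=
    ((continuousAt_const.mul (hinv0.pow 2)).mul hg2.continuousAt)
  have hEtend2 : Tendsto (fun x => (deriv y1 x * x⁻¹) * ((5 + 7*x^2) * (1 - x^2)⁻¹)
      - (1/2)*(deriv y1 x)^2
      - 8 * ((1 - x^2)⁻¹)^2 * (6 - 8 * Real.exp (y1 x * (-(1:ℝ)/3)) * Real.exp (y2 x * (-(1:ℝ)/3))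
          + 2 * Real.exp (y1 x * (-(1:ℝ)/3)) * Real.exp (y2 x * (-(4:ℝ)/3)))) (𝓝[>] (0:ℝ))
      (𝓝 (A * ((5 + 7*(0:ℝ)^2) * (1 - (0:ℝ)^2)⁻¹) - (1/2)*(deriv y1 0)^2
        - 8 * ((1 - (0:ℝ)^2)⁻¹)^2 * (6 - 8 * Real.exp (y1 0 * (-(1:ℝ)/3)) * Real.exp (y2 0 * (-(1:ℝ)/3))
            + 2 * Real.exp (y1 0 * (-(1:ℝ)/3)) * Real.exp (y2 0 * (-(4:ℝ)/3))))) := by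
    exact ((h1.mul (ht2.tendsto.mono_left nhdsWithin_le_nhds)).sub
      (ht3.tendsto.mono_left nhdsWithin_le_nhds)).sub
      (ht4.tendsto.mono_left nhdsWithin_le_nhds)
  have hEq : (fun x => deriv (deriv y1) x) =ᶠ[𝓝[>] (0:ℝ)]
      (fun x => (deriv y1 x * x⁻¹) * ((5 + 7*x^2) * (1 - x^2)⁻¹) - (1/2)*(deriv y1 x)^2
      - 8 * ((1 - x^2)⁻¹)^2 * (6 - 8 * Real.exp (y1 x * (-(1:ℝ)/3)) * Real.exp (y2 x * (-(1:ℝ)/3))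
          + 2 * Real.exp (y1 x * (-(1:ℝ)/3)) * Real.exp (y2 x * (-(4:ℝ)/3)))) := by
    filter_upwards [Ioo_mem_nhdsGT_of_mem (⟨le_refl 0, one_pos⟩ : (0:ℝ) ∈ Ico 0 1)] with x hx
    exact hE2' x hx
  have hAV := tendsto_nhds_unique (hEtend1.congr' hEq) hEtend2
  rw [hsol.der1_0] at hAV
  norm_num at hAV
  -- hAV : A = A * 5 - 8 * (...) or similar; extract positivity of bracket
  -- final algebra
  have h₁ : (Real.exp (y2 0) * Real.exp (y1 0)) ^ (-(1:ℝ)/3)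
      = Real.exp (y1 0 * (-(1:ℝ)/3)) * Real.exp (y2 0 * (-(1:ℝ)/3)) := by
    rw [← Real.exp_add, hexp_rpow, ← Real.exp_add]
    ring_nf
  rw [h₁, hexp_rpow, hexp_rpow]
  ring_nf at hAV ⊢
  linarith
end

section
/- Let (y1, y2) be a solution of the Berger boundary value problem with phi(0) > 1/4 and phi(0) ≠ 1 (where phi = exp∘y2). Then y1'(x) < 12 x (1−x^2)^{-1} for every x ∈ (0,1). -/
open Real Set

open Filter Topology in
lemma secondDerivTest {f : ℝ → ℝ} (hf : ContDiff ℝ (⊤:ℕ∞) f) {x₀ : ℝ}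
    (hx₀ : x₀ ∈ Ioo (0:ℝ) 1) (hmin : IsMinOn f (Icc 0 1) x₀) :
    0 ≤ deriv (deriv f) x₀ := by
  by_contra hneg
  push_neg at hneg
  have hd2 : ContDiff ℝ (⊤:ℕ∞) (deriv f) := (contDiff_infty_iff_deriv.mp hf).2
  have hnb : Icc (0:ℝ) 1 ∈ 𝓝 x₀ := Icc_mem_nhds hx₀.1 hx₀.2
  have hloc : IsLocalMin f x₀ := hmin.isLocalMin hnb
  have hd0 : deriv f x₀ = 0 :=
    hloc.deriv_eq_zero
  have hderiv : HasDerivAt (deriv f) (deriv (deriv f) x₀) x₀ :=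
    (hd2.differentiable (by simp) x₀).hasDerivAt
  have hslope := hasDerivAt_iff_tendsto_slope.mp hderiv
  have h1 : ∀ᶠ z in 𝓝[≠] x₀, slope (deriv f) x₀ z < 0 :=
    hslope.eventually_lt_const hneg
  have h2 : ∀ᶠ z in 𝓝[>] x₀, deriv f z < 0 := by
    have h1' : ∀ᶠ z in 𝓝[>] x₀, slope (deriv f) x₀ z < 0 :=
      h1.filter_mono (nhdsWithin_mono _ (fun z hz => ne_of_gt hz))
    filter_upwards [h1', self_mem_nhdsWithin] with z hz hz'
    rw [slope_def_field, hd0, sub_zero] at hz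
    have hzx : 0 < z - x₀ := sub_pos.mpr hz'
    by_contra hc
    push_neg at hc
    exact absurd (div_nonneg hc hzx.le) (by simpa using not_le.mpr hz)
  obtain ⟨u, hu, hsub⟩ := mem_nhdsGT_iff_exists_Ioo_subset.mp h2
  set b := min ((x₀ + u) / 2) ((x₀ + 1) / 2) with hb
  have hub : x₀ < u := hu
  have hbx : x₀ < b := by
    apply lt_min <;> linarith [hx₀.2]
  have hbu : b < u := lt_of_le_of_lt (min_le_left _ _) (by linarith)
  have hb1 : b < 1 := lt_of_le_of_lt (min_le_right _ _) (by linarith [hx₀.2])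
  have hanti : StrictAntiOn f (Icc x₀ b) := by
    apply strictAntiOn_of_deriv_neg (convex_Icc x₀ b) (hf.continuous.continuousOn)
    intro z hz
    rw [interior_Icc] at hz
    exact hsub ⟨hz.1, lt_trans hz.2 hbu⟩
  have hlt : f b < f x₀ :=
    hanti (left_mem_Icc.mpr hbx.le) (right_mem_Icc.mpr hbx.le) hbx
  have hge : f x₀ ≤ f b := hmin ⟨by linarith [hx₀.1], hb1.le⟩
  linarith

lemma phi_gt_quarter (y1 y2 : ℝ → ℝ) (hsol : BergerBVPSolution y1 y2)
    (hphi0_lb : 1/4 < Real.exp (y2 0)) :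
    ∀ x ∈ Icc (0:ℝ) 1, 1/4 < Real.exp (y2 x) := by
  by_contra hcon
  push_neg at hcon
  obtain ⟨xb, hxbm, hxb⟩ := hcon
  obtain ⟨x₀, hx₀m, hmin⟩ :=
    isCompact_Icc.exists_isMinOn ⟨0, left_mem_Icc.mpr zero_le_one⟩
      hsol.smooth2.continuous.continuousOn
  have hle : y2 x₀ ≤ y2 xb := hmin hxbm
  have hφ0 : Real.exp (y2 x₀) ≤ 1/4 := le_trans (exp_le_exp.mpr hle) hxb
  have hne0 : x₀ ≠ 0 := by
    rintro rfl; linarith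
  have hne1 : x₀ ≠ 1 := by
    rintro rfl; rw [hsol.bdryPhi] at hφ0; linarith
  have hx₀ : x₀ ∈ Ioo (0:ℝ) 1 :=
    ⟨lt_of_le_of_ne hx₀m.1 (Ne.symm hne0), lt_of_le_of_ne hx₀m.2 hne1⟩
  have h2nd : 0 ≤ deriv (deriv y2) x₀ := secondDerivTest hsol.smooth2 hx₀ hmin
  have hv0 : deriv y2 x₀ = 0 :=
    (hmin.isLocalMin (Icc_mem_nhds hx₀.1 hx₀.2)).deriv_eq_zero
  have hE3 := hsol.eqE3 x₀ hx₀
  rw [BergerE3, hv0] at hE3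
  have hq : (0:ℝ) < ((1 - x₀^2)⁻¹)^2 := by
    have : (0:ℝ) < 1 - x₀^2 := by nlinarith [hx₀.1, hx₀.2]
    positivity
  have ha : (0:ℝ) < Real.exp (y1 x₀) ^ (-(1:ℝ)/3) * Real.exp (y2 x₀) ^ (-(1:ℝ)/3) :=
    mul_pos (rpow_pos_of_pos (exp_pos _) _) (rpow_pos_of_pos (exp_pos _) _)
  have hinv : (3:ℝ) ≤ (Real.exp (y2 x₀))⁻¹ - 1 := by
    have hp := exp_pos (y2 x₀)
    have hmc : Real.exp (y2 x₀) * (Real.exp (y2 x₀))⁻¹ = 1 := mul_inv_cancel₀ hp.ne'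
    nlinarith [inv_pos.mpr hp]
  nlinarith [mul_pos (mul_pos hq ha) (by linarith : (0:ℝ) < (Real.exp (y2 x₀))⁻¹ - 1)]

/-- for a solution of the Berger BVP with `phi(0) > 1/4` and `phi(0) ≠ 1`,
one has `y1'(x) < 12x(1−x²)⁻¹` on `(0,1)`. -/
theorem berger_y1_deriv_upper_bound (y1 y2 : ℝ → ℝ)
    (hsol : BergerBVPSolution y1 y2)
    (hphi0_lb : 1/4 < Real.exp (y2 0))
    (hphi0 : Real.exp (y2 0) ≠ 1) :
    ∀ x ∈ Ioo (0:ℝ) 1, deriv y1 x < 12 * x * (1 - x^2)⁻¹ := by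
  have hφ := phi_gt_quarter y1 y2 hsol hphi0_lb
  have hu_cont : Continuous (deriv y1) :=
    (contDiff_infty_iff_deriv.mp hsol.smooth1).2.continuous
  -- key product identity
  have prod_key : ∀ x ∈ Ioo (0:ℝ) 1,
      (deriv y1 x - 12 * x * (1 - x^2)⁻¹) * (deriv y1 x - 12 * x⁻¹ * (1 - x^2)⁻¹)
      = (deriv y2 x)^2 + 48 * ((1 - x^2)⁻¹)^2 *
          (4 * (Real.exp (y1 x) ^ (-(1:ℝ)/3) * Real.exp (y2 x) ^ (-(1:ℝ)/3))
            - Real.exp (y1 x) ^ (-(1:ℝ)/3) * Real.exp (y2 x) ^ (-(4:ℝ)/3)) := by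
    intro x hx
    have h1 := hsol.eqE1 x hx
    have h2 := hsol.eqE2 x hx
    rw [BergerE1] at h1
    rw [BergerE2] at h2
    have hP : x * x⁻¹ = 1 := mul_inv_cancel₀ (ne_of_gt hx.1)
    linear_combination (3:ℝ) * h2 - (3:ℝ) * h1 +
      (12 * deriv y1 x * (1 - x^2)⁻¹ * x + 144 * ((1 - x^2)⁻¹)^2) * hP
  -- positivity of the right-hand side
  have Epos : ∀ x ∈ Ioo (0:ℝ) 1,
      0 < (deriv y2 x)^2 + 48 * ((1 - x^2)⁻¹)^2 *
          (4 * (Real.exp (y1 x) ^ (-(1:ℝ)/3) * Real.exp (y2 x) ^ (-(1:ℝ)/3))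
            - Real.exp (y1 x) ^ (-(1:ℝ)/3) * Real.exp (y2 x) ^ (-(4:ℝ)/3)) := by
    intro x hx
    have hb : Real.exp (y2 x) ^ (-(4:ℝ)/3)
        = Real.exp (y2 x) ^ (-(1:ℝ)/3) * (Real.exp (y2 x))⁻¹ := by
      rw [← Real.rpow_neg_one (Real.exp (y2 x)), ← Real.rpow_add (exp_pos _)]
      norm_num
    have hq : (0:ℝ) < ((1 - x^2)⁻¹)^2 := by
      have : (0:ℝ) < 1 - x^2 := by nlinarith [hx.1, hx.2]
      positivity
    have ha : (0:ℝ) < Real.exp (y1 x) ^ (-(1:ℝ)/3) * Real.exp (y2 x) ^ (-(1:ℝ)/3) :=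
      mul_pos (rpow_pos_of_pos (exp_pos _) _) (rpow_pos_of_pos (exp_pos _) _)
    have hφx := hφ x ⟨hx.1.le, hx.2.le⟩
    have hinv : (Real.exp (y2 x))⁻¹ < 4 := by
      have hp := exp_pos (y2 x)
      have hmc : Real.exp (y2 x) * (Real.exp (y2 x))⁻¹ = 1 := mul_inv_cancel₀ hp.ne'
      nlinarith [inv_pos.mpr hp]
    rw [hb]
    nlinarith [mul_pos (mul_pos hq ha) (by linarith : (0:ℝ) < 4 - (Real.exp (y2 x))⁻¹),
      sq_nonneg (deriv y2 x)]
  -- continuity of the second factor on (0,1)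
  have hHcont : ContinuousOn (fun z : ℝ => deriv y1 z - 12 * z⁻¹ * (1 - z^2)⁻¹)
      (Ioo (0:ℝ) 1) := by
    apply hu_cont.continuousOn.sub
    apply ContinuousOn.mul
    · exact (continuousOn_const.mul (continuousOn_inv₀.mono
        (fun z hz => ne_of_gt hz.1)))
    · apply ContinuousOn.inv₀ (by fun_prop)
      intro z hz
      nlinarith [hz.1, hz.2]
  -- the second factor is negative at some point
  have hev : ∀ᶠ z in nhds (0:ℝ), deriv y1 z < 12 := by
    have hc : Filter.Tendsto (deriv y1) (nhds 0) (nhds 0) := by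
      have := hu_cont.continuousAt (x := (0:ℝ))
      rwa [ContinuousAt, hsol.der1_0] at this
    exact hc.eventually_lt_const (by norm_num)
  obtain ⟨δ, hδ, hδprop⟩ := Metric.eventually_nhds_iff.mp hev
  set x₀ := min δ 1 / 2 with hx₀def
  have hx₀mem : x₀ ∈ Ioo (0:ℝ) 1 := by
    constructor
    · have := lt_min hδ one_pos; positivity
    · have : min δ 1 ≤ 1 := min_le_right _ _; linarith
  have hx₀δ : dist x₀ 0 < δ := by
    rw [Real.dist_eq, sub_zero, abs_of_pos hx₀mem.1]
    have : min δ 1 ≤ δ := min_le_left _ _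
    linarith
  have hHx₀ : deriv y1 x₀ - 12 * x₀⁻¹ * (1 - x₀^2)⁻¹ < 0 := by
    have h12 := hδprop hx₀δ
    have ht : (0:ℝ) < x₀ * (1 - x₀^2) := by nlinarith [hx₀mem.1, hx₀mem.2]
    have ht1 : x₀ * (1 - x₀^2) < 1 := by nlinarith [hx₀mem.1, hx₀mem.2]
    have htinv : 1 < (x₀ * (1 - x₀^2))⁻¹ := by
      have hmc := mul_inv_cancel₀ ht.ne'
      nlinarith [inv_pos.mpr ht]
    have : x₀⁻¹ * (1 - x₀^2)⁻¹ = (x₀ * (1 - x₀^2))⁻¹ := (mul_inv _ _).symm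
    nlinarith
  -- the second factor is negative everywhere on (0,1)
  have Hneg : ∀ x ∈ Ioo (0:ℝ) 1, deriv y1 x - 12 * x⁻¹ * (1 - x^2)⁻¹ < 0 := by
    intro x hx
    by_contra hc
    push_neg at hc
    have hne : deriv y1 x - 12 * x⁻¹ * (1 - x^2)⁻¹ ≠ 0 := by
      intro h0
      have := prod_key x hx
      rw [h0, mul_zero] at this
      exact absurd this.symm (ne_of_gt (Epos x hx))
    have hpos : 0 < deriv y1 x - 12 * x⁻¹ * (1 - x^2)⁻¹ := lt_of_le_of_ne hc (Ne.symm hne)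
    rcases lt_trichotomy x₀ x with hlt | heq | hgt
    · obtain ⟨c, hcm, hc0⟩ := intermediate_value_Icc hlt.le
        (hHcont.mono (fun z hz => ⟨lt_of_lt_of_le hx₀mem.1 hz.1, lt_of_le_of_lt hz.2 hx.2⟩))
        (⟨hHx₀.le, hpos.le⟩ : (0:ℝ) ∈ Icc _ _)
      have hcIoo : c ∈ Ioo (0:ℝ) 1 := ⟨lt_of_lt_of_le hx₀mem.1 hcm.1, lt_of_le_of_lt hcm.2 hx.2⟩
      have hc0' : deriv y1 c - 12 * c⁻¹ * (1 - c ^ 2)⁻¹ = 0 := hc0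
      have := prod_key c hcIoo
      rw [hc0', mul_zero] at this
      exact absurd this.symm (ne_of_gt (Epos c hcIoo))
    · rw [← heq] at hpos; linarith
    · obtain ⟨c, hcm, hc0⟩ := intermediate_value_Icc' hgt.le
        (hHcont.mono (fun z hz => ⟨lt_of_lt_of_le hx.1 hz.1, lt_of_le_of_lt hz.2 hx₀mem.2⟩))
        (⟨hHx₀.le, hpos.le⟩ : (0:ℝ) ∈ Icc _ _)
      have hcIoo : c ∈ Ioo (0:ℝ) 1 := ⟨lt_of_lt_of_le hx.1 hcm.1, lt_of_le_of_lt hcm.2 hx₀mem.2⟩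
      have hc0' : deriv y1 c - 12 * c⁻¹ * (1 - c ^ 2)⁻¹ = 0 := hc0
      have := prod_key c hcIoo
      rw [hc0', mul_zero] at this
      exact absurd this.symm (ne_of_gt (Epos c hcIoo))
  -- conclusion
  intro x hx
  have hp := prod_key x hx
  have hE := Epos x hx
  have hH := Hneg x hx
  by_contra hcon
  push_neg at hcon
  nlinarith [mul_nonpos_of_nonneg_of_nonpos (by linarith : (0:ℝ) ≤ deriv y1 x - 12 * x * (1 - x^2)⁻¹) hH.le]
end

section
/- Let f : [0,1) → ℝ be continuous and let Phi : (0,1) → ℝ be differentiable and satisfy Phi'(x) + ( f(x) − 4 x^{-1}(1+2x^2)(1−x^2)^{-1} ) Phi(x) = 0 for all x ∈ (0,1). If Phi(x)/x^4 → 0 as x → 0+, then Phi(x) = 0 for all x ∈ (0,1). -/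
open Real Set MeasureTheory intervalIntegral

/-- a solution `Phi` on `(0,1)` of the singular linear ODE
`Phi' + (f(x) − 4x⁻¹(1+2x²)(1−x²)⁻¹) Phi = 0`, with `f` continuous on `[0,1)`, which
satisfies `Phi(x)/x⁴ → 0` as `x → 0⁺`, vanishes identically on `(0,1)`. -/
theorem singular_linear_ode_uniqueness (f Phi : ℝ → ℝ)
    (hf : ContinuousOn f (Ico 0 1))
    (hdiff : ∀ x ∈ Ioo (0:ℝ) 1, DifferentiableAt ℝ Phi x)
    (hode : ∀ x ∈ Ioo (0:ℝ) 1,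
      deriv Phi x + (f x - 4 * x⁻¹ * (1 + 2*x^2) * (1 - x^2)⁻¹) * Phi x = 0)
    (hlim : Filter.Tendsto (fun x => Phi x / x^4) (nhdsWithin 0 (Ioi 0)) (nhds 0)) :
    ∀ x ∈ Ioo (0:ℝ) 1, Phi x = 0 := by
  set F : ℝ → ℝ := fun x => ∫ t in (0:ℝ)..x, f t with hFdef
  -- derivative of the primitive F
  have hFderiv : ∀ x ∈ Ioo (0:ℝ) 1, HasDerivAt F (f x) x := by
    intro x hx
    have hsub : Icc (0:ℝ) x ⊆ Ico 0 1 := fun t ht => ⟨ht.1, lt_of_le_of_lt ht.2 hx.2⟩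
    have hint : IntervalIntegrable f volume 0 x := by
      apply ContinuousOn.intervalIntegrable
      rw [uIcc_of_le hx.1.le]
      exact hf.mono hsub
    have hca : ContinuousAt f x :=
      hf.continuousAt (Ico_mem_nhds hx.1 hx.2)
    exact intervalIntegral.integral_hasDerivAt_right hint
      ((hf.mono Ioo_subset_Ico_self).stronglyMeasurableAtFilter isOpen_Ioo x hx) hca
  set G : ℝ → ℝ := fun x => 6 * Real.log (1 - x^2) + F x - 4 * Real.log x with hGdef
  have hGderiv : ∀ x ∈ Ioo (0:ℝ) 1,
      HasDerivAt G (f x - 4 * x⁻¹ * (1 + 2*x^2) * (1 - x^2)⁻¹) x := by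
    intro x hx
    have hx0 : (0:ℝ) < x := hx.1
    have hx1 : x < 1 := hx.2
    have hq : (0:ℝ) < 1 - x^2 := by nlinarith
    have h2 : HasDerivAt (fun y : ℝ => 1 - y^2) (-(2*x)) x := by
      simpa using ((hasDerivAt_pow 2 x).const_sub 1)
    have h1 : HasDerivAt (fun y : ℝ => Real.log (1 - y^2)) ((1 - x^2)⁻¹ * -(2*x)) x :=
      by have := (Real.hasDerivAt_log hq.ne').comp x h2; exact this
    have h3 : HasDerivAt G
        (6 * ((1 - x^2)⁻¹ * -(2*x)) + f x - 4 * x⁻¹) x := by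
      exact (((h1.const_mul 6).add (hFderiv x hx)).sub
        ((Real.hasDerivAt_log hx0.ne').const_mul 4))
    convert h3 using 1
    field_simp
    ring
  set h : ℝ → ℝ := fun x => Phi x * Real.exp (G x) with hhdef
  have hhderiv : ∀ x ∈ Ioo (0:ℝ) 1, HasDerivAt h 0 x := by
    intro x hx
    have hP : HasDerivAt Phi (deriv Phi x) x := (hdiff x hx).hasDerivAt
    have hE : HasDerivAt (fun y => Real.exp (G y))
        (Real.exp (G x) * (f x - 4 * x⁻¹ * (1 + 2*x^2) * (1 - x^2)⁻¹)) x :=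
      (hGderiv x hx).exp
    have := hP.mul hE
    refine this.congr_deriv ?_; symm
    have h0 := hode x hx
    linear_combination (-Real.exp (G x)) * h0
  -- h is constant on Ioo 0 1
  have hconst : ∀ x ∈ Ioo (0:ℝ) 1, ∀ y ∈ Ioo (0:ℝ) 1, x ≤ y → h x = h y := by
    intro x hx y hy hxy
    rcases eq_or_lt_of_le hxy with rfl | hlt
    · rfl
    · have hsub : Icc x y ⊆ Ioo (0:ℝ) 1 := fun t ht => ⟨lt_of_lt_of_le hx.1 ht.1,
        lt_of_le_of_lt ht.2 hy.2⟩
      have hcont : ContinuousOn h (Icc x y) := fun t ht =>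
        ((hhderiv t (hsub ht)).continuousAt).continuousWithinAt
      have hd : ∀ t ∈ Ico x y, HasDerivWithinAt h 0 (Ici t) t := fun t ht =>
        (hhderiv t (hsub ⟨ht.1, ht.2.le⟩)).hasDerivWithinAt
      exact (constant_of_has_deriv_right_zero hcont hd y ⟨hxy, le_refl y⟩).symm
  have hhalf : (1/2 : ℝ) ∈ Ioo (0:ℝ) 1 := by norm_num
  have hval : ∀ x ∈ Ioo (0:ℝ) 1, h x = h (1/2) := by
    intro x hx
    rcases le_total x (1/2) with hle | hle
    · exact hconst x hx _ hhalf hle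
    · exact (hconst _ hhalf x hx hle).symm
  -- F is continuous within at 0
  have hFcont : Filter.Tendsto F (nhdsWithin 0 (Ioi 0)) (nhds 0) := by
    have hsub : uIcc (0:ℝ) (1/2) ⊆ Ico 0 1 := by
      rw [uIcc_of_le (by norm_num : (0:ℝ) ≤ 1/2)]
      intro t ht; exact ⟨ht.1, lt_of_le_of_lt ht.2 (by norm_num)⟩
    have hint : IntegrableOn f (uIcc (0:ℝ) (1/2)) volume :=
      (hf.mono hsub).integrableOn_compact isCompact_uIcc
    have hc : ContinuousOn F (uIcc (0:ℝ) (1/2)) :=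
      intervalIntegral.continuousOn_primitive_interval hint
    have h0m : (0:ℝ) ∈ uIcc (0:ℝ) (1/2) := by
      rw [uIcc_of_le (by norm_num : (0:ℝ) ≤ 1/2)]; constructor <;> norm_num
    have hc0 := (hc 0 h0m).tendsto
    have hF0 : F 0 = 0 := intervalIntegral.integral_same
    rw [hF0] at hc0
    refine hc0.mono_left ?_
    rw [nhdsWithin_le_iff]
    refine Filter.mem_of_superset (Ioo_mem_nhdsGT (by norm_num : (0:ℝ) < 1/2)) ?_
    intro t ht
    rw [uIcc_of_le (by norm_num : (0:ℝ) ≤ 1/2)]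
    exact ⟨ht.1.le, ht.2.le⟩
  -- h tends to 0 at 0+
  have hhtend : Filter.Tendsto h (nhdsWithin 0 (Ioi 0)) (nhds 0) := by
    have hfac : Filter.Tendsto (fun x : ℝ => (1 - x^2)^6 * Real.exp (F x))
        (nhdsWithin 0 (Ioi 0)) (nhds 1) := by
      have h1 : Filter.Tendsto (fun x : ℝ => (1 - x^2)^6) (nhdsWithin 0 (Ioi 0)) (nhds 1) := by
        have : Filter.Tendsto (fun x : ℝ => (1 - x^2)^6) (nhds 0) (nhds 1) := by
          have := (Continuous.tendsto (by continuity : Continuous fun x : ℝ => (1 - x^2)^6) 0)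
          simpa using this
        exact this.mono_left nhdsWithin_le_nhds
      have h2 : Filter.Tendsto (fun x : ℝ => Real.exp (F x))
          (nhdsWithin 0 (Ioi 0)) (nhds 1) := by
        have := (Real.continuous_exp.tendsto 0).comp hFcont; rw [Real.exp_zero] at this; exact this
      simpa using h1.mul h2
    have hmul := hlim.mul hfac
    rw [zero_mul] at hmul
    refine hmul.congr' ?_
    filter_upwards [Ioo_mem_nhdsGT one_pos] with x hx
    have hx0 : (0:ℝ) < x := hx.1
    have hq : (0:ℝ) < 1 - x^2 := by nlinarith [hx.2, hx.1]
    have hexp : Real.exp (G x) = (1 - x^2)^6 * Real.exp (F x) / x^4 := by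
      rw [hGdef]
      rw [Real.exp_sub, Real.exp_add]
      rw [show (6:ℝ) * Real.log (1 - x^2) = ((6:ℕ):ℝ) * Real.log (1 - x^2) by norm_num,
        show (4:ℝ) * Real.log x = ((4:ℕ):ℝ) * Real.log x by norm_num]
      rw [← Real.log_pow, ← Real.log_pow, Real.exp_log (by positivity),
        Real.exp_log (by positivity)]
    rw [hhdef]
    simp only
    rw [hexp]
    field_simp
  -- conclude h (1/2) = 0
  have hev : h =ᶠ[nhdsWithin 0 (Ioi 0)] fun _ => h (1/2) := by
    filter_upwards [Ioo_mem_nhdsGT one_pos] with x hx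
    exact hval x hx
  have hc0 : h (1/2) = 0 := by
    have hconsttend : Filter.Tendsto (fun _ : ℝ => h (1/2)) (nhdsWithin 0 (Ioi 0)) (nhds 0) :=
      Filter.Tendsto.congr' hev hhtend
    exact tendsto_nhds_unique tendsto_const_nhds hconsttend
  intro x hx
  have hx0 : h x = 0 := by rw [hval x hx, hc0]
  have := Real.exp_pos (G x)
  rw [hhdef] at hx0
  simp only at hx0
  rcases mul_eq_zero.mp hx0 with h' | h'
  · exact h'
  · exact absurd h' (Real.exp_ne_zero _)
end

section
/- Let y1, y2 : (0,1) → ℝ be twice differentiable and set K = exp∘y1, phi = exp∘y2. Suppose that on (0,1) the equation (E3) y2'' + (1/2) y1' y2' − 2 x^{-1}(1+2x^2)(1−x^2)^{-1} y2' + 32 (1−x^2)^{-2} K^{-1/3} phi^{-1/3}(phi^{-1} − 1) = 0 holds. Then for all x ∈ (0,1): d/dx [ x^{-2}(1−x^2)^3 K(x)^{1/2} y2'(x) ] + 32 x^{-2}(1−x^2) K(x)^{1/6} phi(x)^{-4/3} (1 − phi(x)) = 0. -/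
open Real Set

/-- divergence form of equation (E3) of the Berger Einstein ODE system,
with `K = exp ∘ y1`, `phi = exp ∘ y2`: if (E3) holds on `(0,1)`, then
`d/dx [x⁻²(1−x²)³ K^{1/2} y2'] + 32x⁻²(1−x²) K^{1/6} phi^{-4/3}(1 − phi) = 0`
on `(0,1)`. -/
theorem berger_E3_divergence_form (y1 y2 : ℝ → ℝ)
    (hd1 : ∀ t ∈ Ioo (0:ℝ) 1, DifferentiableAt ℝ y1 t)
    (hd1' : ∀ t ∈ Ioo (0:ℝ) 1, DifferentiableAt ℝ (deriv y1) t)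
    (hd2 : ∀ t ∈ Ioo (0:ℝ) 1, DifferentiableAt ℝ y2 t)
    (hd2' : ∀ t ∈ Ioo (0:ℝ) 1, DifferentiableAt ℝ (deriv y2) t)
    (hE3 : ∀ x ∈ Ioo (0:ℝ) 1,
      deriv (deriv y2) x + (1/2) * deriv y1 x * deriv y2 x
        - 2 * x⁻¹ * (1 + 2*x^2) * (1 - x^2)⁻¹ * deriv y2 x
        + 32 * ((1 - x^2)⁻¹)^2 * Real.exp (y1 x) ^ (-(1:ℝ)/3)
          * Real.exp (y2 x) ^ (-(1:ℝ)/3) * ((Real.exp (y2 x))⁻¹ - 1) = 0) :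
    ∀ x ∈ Ioo (0:ℝ) 1,
      HasDerivAt (fun t => (t⁻¹)^2 * (1 - t^2)^3 * Real.exp (y1 t) ^ ((1:ℝ)/2) * deriv y2 t)
        (-(32 * (x⁻¹)^2 * (1 - x^2) * Real.exp (y1 x) ^ ((1:ℝ)/6)
          * Real.exp (y2 x) ^ (-(4:ℝ)/3) * (1 - Real.exp (y2 x)))) x := by
  intro x hx
  obtain ⟨hx0, hx1⟩ := hx
  have hx0' : x ≠ 0 := ne_of_gt hx0
  have hc : (1 : ℝ) - x ^ 2 ≠ 0 := by nlinarith
  have hrw : ∀ y r : ℝ, Real.exp y ^ r = Real.exp (y * r) := fun y r => by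
    rw [Real.rpow_def_of_pos (Real.exp_pos y), Real.log_exp]
  have hE3x := hE3 x ⟨hx0, hx1⟩
  simp only [hrw] at hE3x ⊢
  -- build the derivative
  have h1 : HasDerivAt (fun t : ℝ => (t⁻¹) ^ 2) (2 * x⁻¹ ^ 1 * (-(x ^ 2)⁻¹)) x :=
    (hasDerivAt_inv hx0').pow 2
  have h2 : HasDerivAt (fun t : ℝ => (1 - t ^ 2) ^ 3)
      (3 * (1 - x ^ 2) ^ 2 * (0 - 2 * x ^ 1 * 1)) x :=
    ((hasDerivAt_const x (1:ℝ)).sub ((hasDerivAt_id x).pow 2)).pow 3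
  have h3 : HasDerivAt (fun t : ℝ => Real.exp (y1 t * (1 / 2)))
      (Real.exp (y1 x * (1 / 2)) * (deriv y1 x * (1 / 2))) x :=
    (((hd1 x ⟨hx0, hx1⟩).hasDerivAt).mul_const ((1:ℝ) / 2)).exp
  have h4 : HasDerivAt (deriv y2) (deriv (deriv y2) x) x :=
    (hd2' x ⟨hx0, hx1⟩).hasDerivAt
  have H := ((h1.mul h2).mul h3).mul h4
  refine H.congr_deriv ?_
  simp only [Pi.mul_apply]
  -- now an algebraic identity
  have e1 : Real.exp (y1 x * (-1 / 3)) * Real.exp (y1 x * (1 / 2))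
      = Real.exp (y1 x * (1 / 6)) := by
    rw [← Real.exp_add]; congr 1; ring
  have e2 : Real.exp (y2 x * (-1 / 3)) = Real.exp (y2 x * (-4 / 3)) * Real.exp (y2 x) := by
    rw [← Real.exp_add]; congr 1; ring
  have hb' : deriv (deriv y2) x =
      -((1/2) * deriv y1 x * deriv y2 x
        - 2 * x⁻¹ * (1 + 2*x^2) * (1 - x^2)⁻¹ * deriv y2 x
        + 32 * ((1 - x^2)⁻¹)^2 * Real.exp (y1 x * (-1 / 3))
          * Real.exp (y2 x * (-1 / 3)) * ((Real.exp (y2 x))⁻¹ - 1)) := by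
    linarith [hE3x]
  rw [hb', e2]
  have e1' : Real.exp (y1 x * (-1 / 3))
      = Real.exp (y1 x * (1 / 6)) / Real.exp (y1 x * (1 / 2)) := by
    rw [eq_div_iff (Real.exp_ne_zero _)]; exact e1
  rw [e1']
  field_simp
  ring
end

section
/- Let 0 < δ ≤ 1 and let y1, y2 : [0, δ) → ℝ be smooth (C^∞) with y1'(0) = y2'(0) = 0, and set K = exp∘y1, phi = exp∘y2. Suppose that for all x ∈ (0, δ) the equation (E3) y2'' + (1/2) y1' y2' − 2 x^{-1}(1+2x^2)(1−x^2)^{-1} y2' + 32 (1−x^2)^{-2} K^{-1/3} phi^{-1/3}(phi^{-1} − 1) = 0 holds. Then y2''(0) = 32 K(0)^{-1/3} phi(0)^{-4/3} (1 − phi(0)). -/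
open Real Set Filter Topology

/-- for smooth `y1, y2` on `[0, δ)` (realized as globally smooth functions)
with `y1'(0) = y2'(0) = 0` satisfying equation (E3) of the Berger Einstein ODE system on
`(0, δ)`, one has `y2''(0) = 32 K(0)^{-1/3} phi(0)^{-4/3}(1 − phi(0))`, where
`K = exp ∘ y1`, `phi = exp ∘ y2`. -/
theorem berger_y2_second_deriv_at_zero (δ : ℝ) (hδ0 : 0 < δ) (hδ1 : δ ≤ 1)
    (y1 y2 : ℝ → ℝ)
    (hs1 : ContDiff ℝ (⊤ : ℕ∞) y1) (hs2 : ContDiff ℝ (⊤ : ℕ∞) y2)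
    (h10 : deriv y1 0 = 0) (h20 : deriv y2 0 = 0)
    (hE3 : ∀ x ∈ Ioo (0:ℝ) δ,
      deriv (deriv y2) x + (1/2) * deriv y1 x * deriv y2 x
        - 2 * x⁻¹ * (1 + 2*x^2) * (1 - x^2)⁻¹ * deriv y2 x
        + 32 * ((1 - x^2)⁻¹)^2 * Real.exp (y1 x) ^ (-(1:ℝ)/3)
          * Real.exp (y2 x) ^ (-(1:ℝ)/3) * ((Real.exp (y2 x))⁻¹ - 1) = 0) :
    deriv (deriv y2) 0
      = 32 * Real.exp (y1 0) ^ (-(1:ℝ)/3) * Real.exp (y2 0) ^ (-(4:ℝ)/3)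
        * (1 - Real.exp (y2 0)) := by
  have hd1 : ContDiff ℝ (⊤:ℕ∞) (deriv y1) := (contDiff_infty_iff_deriv.mp hs1).2
  have hd2 : ContDiff ℝ (⊤:ℕ∞) (deriv y2) := (contDiff_infty_iff_deriv.mp hs2).2
  have hdd2 : ContDiff ℝ (⊤:ℕ∞) (deriv (deriv y2)) := (contDiff_infty_iff_deriv.mp hd2).2
  set g : ℝ → ℝ := deriv (deriv y2) with hg
  -- rewrite rpow as exp
  have hrw : ∀ z : ℝ, Real.exp z ^ (-(1:ℝ)/3) = Real.exp ((-(1:ℝ)/3) * z) := by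
    intro z
    rw [Real.rpow_def_of_pos (Real.exp_pos z), Real.log_exp, mul_comm]
  -- the function F
  set F : ℝ → ℝ := fun x =>
    2 * (x⁻¹ * deriv y2 x) * ((1 + 2*x^2) * (1 - x^2)⁻¹)
      - (1/2) * deriv y1 x * deriv y2 x
      - 32 * ((1 - x^2)⁻¹)^2 * Real.exp ((-(1:ℝ)/3) * y1 x)
          * Real.exp ((-(1:ℝ)/3) * y2 x) * ((Real.exp (y2 x))⁻¹ - 1) with hF
  have hgF : ∀ x ∈ Ioo (0:ℝ) δ, g x = F x := by
    intro x hx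
    have := hE3 x hx
    rw [hrw (y1 x), hrw (y2 x)] at this
    simp only [hF]
    nlinarith [this]
  -- limit of x⁻¹ * deriv y2 x
  have hgd : HasDerivAt (deriv y2) (g 0) 0 :=
    ((hd2.differentiable (by simp)) 0).hasDerivAt
  have hslope : Tendsto (fun x : ℝ => x⁻¹ * deriv y2 x) (𝓝[>] (0:ℝ)) (𝓝 (g 0)) := by
    have h1 := (hasDerivAt_iff_tendsto_slope.mp hgd).mono_left
      (nhdsWithin_mono 0 (fun x hx => ne_of_gt hx))
    refine h1.congr' ?_
    filter_upwards [self_mem_nhdsWithin] with x hx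
    simp [slope_def_field, h20, div_eq_inv_mul]
  -- continuity facts
  have hc1 : Tendsto (fun x : ℝ => deriv y1 x * deriv y2 x) (𝓝[>] (0:ℝ)) (𝓝 0) := by
    have : ContinuousAt (fun x : ℝ => deriv y1 x * deriv y2 x) 0 :=
      ((hd1.continuous.continuousAt).mul (hd2.continuous.continuousAt))
    have h : Tendsto (fun x : ℝ => deriv y1 x * deriv y2 x) (𝓝[>] (0:ℝ))
        (𝓝 (deriv y1 0 * deriv y2 0)) := this.tendsto.mono_left nhdsWithin_le_nhds
    simpa [h10, h20] using h
  have hinv : ContinuousAt (fun x : ℝ => (1 - x^2)⁻¹) 0 := by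
    have h1 : ContinuousAt (fun x : ℝ => 1 - x^2) 0 := by fun_prop
    exact h1.inv₀ (by norm_num)
  have hc2 : Tendsto (fun x : ℝ => (1 + 2*x^2) * (1 - x^2)⁻¹) (𝓝[>] (0:ℝ)) (𝓝 1) := by
    have : ContinuousAt (fun x : ℝ => (1 + 2*x^2) * (1 - x^2)⁻¹) 0 :=
      (by fun_prop : ContinuousAt (fun x : ℝ => 1 + 2*x^2) 0).mul hinv
    have h : Tendsto (fun x : ℝ => (1 + 2*x^2) * (1 - x^2)⁻¹) (𝓝[>] (0:ℝ))
        (𝓝 ((1 + 2*(0:ℝ)^2) * (1 - (0:ℝ)^2)⁻¹)) := this.tendsto.mono_left nhdsWithin_le_nhds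
    simpa using h
  have hc3 : Tendsto (fun x : ℝ => 32 * ((1 - x^2)⁻¹)^2 * Real.exp ((-(1:ℝ)/3) * y1 x)
          * Real.exp ((-(1:ℝ)/3) * y2 x) * ((Real.exp (y2 x))⁻¹ - 1)) (𝓝[>] (0:ℝ))
      (𝓝 (32 * Real.exp ((-(1:ℝ)/3) * y1 0) * Real.exp ((-(1:ℝ)/3) * y2 0)
          * ((Real.exp (y2 0))⁻¹ - 1))) := by
    have hct : ContinuousAt (fun x : ℝ => 32 * ((1 - x^2)⁻¹)^2 * Real.exp ((-(1:ℝ)/3) * y1 x)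
          * Real.exp ((-(1:ℝ)/3) * y2 x) * ((Real.exp (y2 x))⁻¹ - 1)) 0 := by
      have he1 : ContinuousAt (fun x : ℝ => Real.exp ((-(1:ℝ)/3) * y1 x)) 0 := by
        exact (Real.continuous_exp.comp (continuous_const.mul hs1.continuous)).continuousAt
      have he2 : ContinuousAt (fun x : ℝ => Real.exp ((-(1:ℝ)/3) * y2 x)) 0 := by
        exact (Real.continuous_exp.comp (continuous_const.mul hs2.continuous)).continuousAt
      have he3 : ContinuousAt (fun x : ℝ => (Real.exp (y2 x))⁻¹ - 1) 0 := by
        exact ((((Real.continuous_exp.comp hs2.continuous).continuousAt).inv₀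
          (ne_of_gt (Real.exp_pos _))).sub continuousAt_const)
      exact ((((continuousAt_const.mul (hinv.pow 2)).mul he1).mul he2).mul he3)
    have h : Tendsto (fun x : ℝ => 32 * ((1 - x^2)⁻¹)^2 * Real.exp ((-(1:ℝ)/3) * y1 x)
          * Real.exp ((-(1:ℝ)/3) * y2 x) * ((Real.exp (y2 x))⁻¹ - 1)) (𝓝[>] (0:ℝ))
        (𝓝 (32 * ((1 - (0:ℝ)^2)⁻¹)^2 * Real.exp ((-(1:ℝ)/3) * y1 0)
          * Real.exp ((-(1:ℝ)/3) * y2 0) * ((Real.exp (y2 0))⁻¹ - 1))) :=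
      hct.tendsto.mono_left nhdsWithin_le_nhds
    simpa using h
  -- combine
  set L : ℝ := 2 * g 0 * 1 - (1/2) * 0
      - 32 * Real.exp ((-(1:ℝ)/3) * y1 0) * Real.exp ((-(1:ℝ)/3) * y2 0)
          * ((Real.exp (y2 0))⁻¹ - 1) with hL
  have hFt : Tendsto F (𝓝[>] (0:ℝ)) (𝓝 L) := by
    have h1 : Tendsto (fun x : ℝ => (2:ℝ) * (x⁻¹ * deriv y2 x) * ((1 + 2*x^2) * (1 - x^2)⁻¹)
        - (1/2) * (deriv y1 x * deriv y2 x)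
        - 32 * ((1 - x^2)⁻¹)^2 * Real.exp ((-(1:ℝ)/3) * y1 x)
          * Real.exp ((-(1:ℝ)/3) * y2 x) * ((Real.exp (y2 x))⁻¹ - 1))
        (𝓝[>] (0:ℝ))
        (𝓝 ((2:ℝ) * g 0 * 1 - (1/2) * 0
          - 32 * Real.exp ((-(1:ℝ)/3) * y1 0) * Real.exp ((-(1:ℝ)/3) * y2 0)
          * ((Real.exp (y2 0))⁻¹ - 1))) :=
      (((tendsto_const_nhds.mul hslope).mul hc2).sub (tendsto_const_nhds.mul hc1)).sub hc3
    rw [hL]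
    refine h1.congr (fun x => ?_)
    simp only [hF]
    ring
  have hgt : Tendsto g (𝓝[>] (0:ℝ)) (𝓝 (g 0)) :=
    ((hdd2.continuous).continuousAt).tendsto.mono_left nhdsWithin_le_nhds
  have hmem : Ioo (0:ℝ) δ ∈ 𝓝[>] (0:ℝ) := Ioo_mem_nhdsGT_of_mem ⟨le_refl 0, hδ0⟩
  have hgt' : Tendsto g (𝓝[>] (0:ℝ)) (𝓝 L) := by
    refine hFt.congr' ?_
    filter_upwards [hmem] with x hx
    exact (hgF x hx).symm
  have hkey : g 0 = L := tendsto_nhds_unique hgt hgt'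
  -- solve: g 0 = 2 g 0 - C  ⇒ g 0 = C
  have hsolve : g 0 = 32 * Real.exp ((-(1:ℝ)/3) * y1 0) * Real.exp ((-(1:ℝ)/3) * y2 0)
          * ((Real.exp (y2 0))⁻¹ - 1) := by
    rw [hL] at hkey; linarith
  rw [hsolve, hrw (y1 0)]
  have h43 : Real.exp (y2 0) ^ (-(4:ℝ)/3)
      = Real.exp ((-(1:ℝ)/3) * y2 0) * (Real.exp (y2 0))⁻¹ := by
    rw [Real.rpow_def_of_pos (Real.exp_pos _), Real.log_exp, ← Real.exp_neg, ← Real.exp_add]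
    ring_nf
  rw [h43]
  have hne : Real.exp (y2 0) ≠ 0 := ne_of_gt (Real.exp_pos _)
  field_simp
end

section
/- Let 0 < δ ≤ 1 and let y1, y2 : [0, δ) → ℝ be smooth (C^∞) with y1'(0) = y2'(0) = 0. Suppose that for all x ∈ (0, δ) the equation (E1) y1'' + (1/6)(y1')^2 + (1/3)(y2')^2 − x^{-1}(1+3x^2)(1−x^2)^{-1} y1' = 0 holds. Then y1'''(0) = 0. -/
open Real Set Filter Topology

private lemma slope_lim (w : ℝ → ℝ) (hw : ContDiff ℝ (⊤ : ℕ∞) w) (hw0 : w 0 = 0) :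
    Tendsto (fun x : ℝ => w x / x) (𝓝[>] 0) (𝓝 (deriv w 0)) := by
  have hd : HasDerivAt w (deriv w 0) 0 :=
    (hw.differentiable (by simp) 0).hasDerivAt
  have := hasDerivAt_iff_tendsto_slope.mp hd
  have h2 : Tendsto (slope w 0) (𝓝[>] 0) (𝓝 (deriv w 0)) :=
    this.mono_left (nhdsWithin_mono 0 (fun x hx => ne_of_gt hx))
  refine h2.congr (fun x => ?_)
  simp [slope, hw0, div_eq_inv_mul]

/-- for smooth `y1, y2` on `[0, δ)` (realized as globally smooth functions)
with `y1'(0) = y2'(0) = 0` satisfying equation (E1) of the Berger Einstein ODE system on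
`(0, δ)`, the third derivative of `y1` vanishes at `0`. -/
theorem berger_y1_third_deriv_at_zero (δ : ℝ) (hδ0 : 0 < δ) (hδ1 : δ ≤ 1)
    (y1 y2 : ℝ → ℝ)
    (hs1 : ContDiff ℝ (⊤ : ℕ∞) y1) (hs2 : ContDiff ℝ (⊤ : ℕ∞) y2)
    (h10 : deriv y1 0 = 0) (h20 : deriv y2 0 = 0)
    (hE1 : ∀ x ∈ Ioo (0:ℝ) δ,
      deriv (deriv y1) x + (1/6) * (deriv y1 x)^2 + (1/3) * (deriv y2 x)^2
        - x⁻¹ * (1 + 3*x^2) * (1 - x^2)⁻¹ * deriv y1 x = 0) :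
    iteratedDeriv 3 y1 0 = 0 := by
  set u : ℝ → ℝ := deriv y1 with hu_def
  set v : ℝ → ℝ := deriv y2 with hv_def
  have hu : ContDiff ℝ (⊤ : ℕ∞) u := (contDiff_infty_iff_deriv.mp hs1).2
  have hv : ContDiff ℝ (⊤ : ℕ∞) v := (contDiff_infty_iff_deriv.mp hs2).2
  have hu' : ContDiff ℝ (⊤ : ℕ∞) (deriv u) := (contDiff_infty_iff_deriv.mp hu).2
  have hu'' : ContDiff ℝ (⊤ : ℕ∞) (deriv (deriv u)) := (contDiff_infty_iff_deriv.mp hu').2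
  -- the quantity to study
  set f : ℝ → ℝ := fun x => x * deriv u x - u x with hf_def
  set g : ℝ → ℝ := fun x => x ^ 2 with hg_def
  -- L'Hopital: f/g → deriv (deriv u) 0 / 2
  have hlhop : Tendsto (fun x => f x / g x) (𝓝[>] (0:ℝ)) (𝓝 (deriv (deriv u) 0 / 2)) := by
    apply HasDerivAt.lhopital_zero_nhdsGT (f' := fun x => x * deriv (deriv u) x)
      (g' := fun x => 2 * x)
    · filter_upwards with x
      have h1 : HasDerivAt (fun x : ℝ => x * deriv u x)
          (1 * deriv u x + x * deriv (deriv u) x) x :=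
        (hasDerivAt_id x).mul (hu'.differentiable (by simp) x).hasDerivAt
      have h2 : HasDerivAt u (deriv u x) x := (hu.differentiable (by simp) x).hasDerivAt
      have := h1.sub h2
      exact this.congr_deriv (by ring)
    · filter_upwards with x
      simpa using (hasDerivAt_pow 2 x)
    · filter_upwards [self_mem_nhdsWithin] with x hx
      exact mul_ne_zero two_ne_zero (ne_of_gt hx)
    · have hc : ContinuousAt f 0 := by
        apply ContinuousAt.sub
        · exact continuousAt_id.mul (hu'.continuous.continuousAt)
        · exact hu.continuous.continuousAt
      have hf0 : f 0 = 0 := by simp [hf_def, h10]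
      have := hc.tendsto
      rw [hf0] at this
      exact this.mono_left nhdsWithin_le_nhds
    · have : Tendsto g (𝓝 0) (𝓝 (g 0)) := (continuous_pow 2).continuousAt
      simp only [hg_def] at this ⊢
      norm_num at this
      exact this.mono_left nhdsWithin_le_nhds
    · have hc : Tendsto (fun x => deriv (deriv u) x / 2) (𝓝[>] (0:ℝ))
          (𝓝 (deriv (deriv u) 0 / 2)) :=
        (((hu''.continuous.continuousAt (x := (0:ℝ))).tendsto).div_const 2).mono_left nhdsWithin_le_nhds
      refine hc.congr' ?_
      filter_upwards [self_mem_nhdsWithin] with x hx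
      rw [div_eq_div_iff two_ne_zero (mul_ne_zero two_ne_zero (ne_of_gt (mem_Ioi.mp hx)))]
      ring
  -- Using the ODE, f/g → 0
  have hzero : Tendsto (fun x => f x / g x) (𝓝[>] (0:ℝ)) (𝓝 0) := by
    have hslopeu := slope_lim u hu h10
    have hslopev := slope_lim v hv h20
    have hulim : Tendsto u (𝓝[>] (0:ℝ)) (𝓝 0) := by
      have := (hu.continuous.continuousAt (x := (0:ℝ))).tendsto
      rw [h10] at this
      exact this.mono_left nhdsWithin_le_nhds
    have hvlim : Tendsto v (𝓝[>] (0:ℝ)) (𝓝 0) := by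
      have := (hv.continuous.continuousAt (x := (0:ℝ))).tendsto
      rw [h20] at this
      exact this.mono_left nhdsWithin_le_nhds
    have hden : Tendsto (fun x : ℝ => 1 - x ^ 2) (𝓝[>] (0:ℝ)) (𝓝 1) := by
      have : Tendsto (fun x : ℝ => 1 - x ^ 2) (𝓝 0) (𝓝 (1 - 0 ^ 2)) :=
        (continuous_const.sub (continuous_pow 2)).continuousAt
      norm_num at this
      exact this.mono_left nhdsWithin_le_nhds
    have hφ : Tendsto (fun x => 4 * u x / (1 - x ^ 2)
        - (1/6) * (u x * (u x / x)) - (1/3) * (v x * (v x / x))) (𝓝[>] (0:ℝ)) (𝓝 0) := by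
      have h1 : Tendsto (fun x => 4 * u x / (1 - x ^ 2)) (𝓝[>] (0:ℝ)) (𝓝 (4 * 0 / 1)) :=
        (hulim.const_mul 4).div hden one_ne_zero
      have h2 : Tendsto (fun x => u x * (u x / x)) (𝓝[>] (0:ℝ)) (𝓝 (0 * deriv u 0)) :=
        hulim.mul hslopeu
      have h3 : Tendsto (fun x => v x * (v x / x)) (𝓝[>] (0:ℝ)) (𝓝 (0 * deriv v 0)) :=
        hvlim.mul hslopev
      have := (h1.sub (h2.const_mul (1/6))).sub (h3.const_mul (1/3))
      norm_num at this
      convert this using 2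
    refine hφ.congr' ?_
    filter_upwards [Ioo_mem_nhdsGT_of_mem (by constructor <;> [rfl; exact hδ0] :
      (0:ℝ) ∈ Ico 0 δ)] with x hx
    have hx0 : x ≠ 0 := ne_of_gt hx.1
    have hx1 : (1 : ℝ) - x ^ 2 ≠ 0 := by nlinarith [hx.1, lt_of_lt_of_le hx.2 hδ1]
    have heq := hE1 x hx
    have hder : deriv u x = x⁻¹ * (1 + 3*x^2) * (1 - x^2)⁻¹ * u x
        - (1/6) * (u x)^2 - (1/3) * (v x)^2 := by
      rw [hu_def]
      linarith [heq]
    simp only [hf_def, hg_def]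
    rw [hder]
    field_simp
    ring
  -- conclude
  have huniq : deriv (deriv u) 0 / 2 = 0 := tendsto_nhds_unique hlhop hzero
  have h3 : deriv (deriv u) 0 = 0 := by linarith
  have : iteratedDeriv 3 y1 = deriv (deriv (deriv y1)) := by
    rw [iteratedDeriv_succ', iteratedDeriv_succ', iteratedDeriv_succ', iteratedDeriv_zero]
  rw [this]
  exact h3
end

section
/- Let 0 < δ ≤ 1 and let y1, y2 : [0, δ) → ℝ be smooth (C^∞) with y1'(0) = y2'(0) = 0. Suppose that for all x ∈ (0, δ) the equation (E1) y1'' + (1/6)(y1')^2 + (1/3)(y2')^2 − x^{-1}(1+3x^2)(1−x^2)^{-1} y1' = 0 holds. Writing [f]_k = f^{(k)}(0)/k! for the k-th Taylor coefficient at 0, one has [y1]_5 = −(4/15) · [y2]_2 · [y2]_3; equivalently, y1^{(5)}(0)/120 = −(4/15) · (y2''(0)/2) · (y2'''(0)/6). -/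
open Real Set

section BergerAux
open Filter Topology

private lemma zero_on_Ioo_deriv {f f' : ℝ → ℝ} {δ : ℝ}
    (hf : ∀ x, HasDerivAt f (f' x) x)
    (h0 : ∀ x ∈ Ioo (0:ℝ) δ, f x = 0) :
    ∀ x ∈ Ioo (0:ℝ) δ, f' x = 0 := by
  intro x hx
  have hev : f =ᶠ[nhds x] (fun _ => (0:ℝ)) :=
    Filter.eventuallyEq_of_mem (isOpen_Ioo.mem_nhds hx) h0
  have h := hev.deriv_eq
  rw [deriv_const] at h
  rw [← (hf x).deriv, h]

private lemma zero_at_zero_of_zero_on_Ioo {f : ℝ → ℝ} {δ : ℝ} (hδ : 0 < δ)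
    (hc : Continuous f) (h0 : ∀ x ∈ Ioo (0:ℝ) δ, f x = 0) : f 0 = 0 := by
  have hne : (nhdsWithin (0:ℝ) (Ioo (0:ℝ) δ)).NeBot := by
    rw [← mem_closure_iff_nhdsWithin_neBot, closure_Ioo hδ.ne]
    exact ⟨le_refl 0, hδ.le⟩
  have h1 : Tendsto f (nhdsWithin (0:ℝ) (Ioo (0:ℝ) δ)) (nhds (f 0)) :=
    (hc.continuousAt).continuousWithinAt
  have h2 : Tendsto f (nhdsWithin (0:ℝ) (Ioo (0:ℝ) δ)) (nhds 0) := by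
    refine tendsto_const_nhds.congr' ?_
    filter_upwards [self_mem_nhdsWithin] with x hx using (h0 x hx).symm
  exact tendsto_nhds_unique h1 h2

private lemma berger_key (δ : ℝ) (hδ0 : 0 < δ)
    (u v : ℝ → ℝ) (hu : ContDiff ℝ (⊤ : ℕ∞) u) (hv : ContDiff ℝ (⊤ : ℕ∞) v)
    (hu0 : u 0 = 0) (hv0 : v 0 = 0)
    (hG0 : ∀ x ∈ Ioo (0:ℝ) δ,
      (x - x^3) * (deriv u x + (u x)^2/6 + (v x)^2/3) - (1 + 3*x^2) * u x = 0) :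
    deriv (deriv (deriv (deriv u))) 0
      = -(8/3) * (deriv v 0) * (deriv (deriv v) 0) := by
  set u1 := deriv u with hu1d
  set u2 := deriv u1 with hu2d
  set u3 := deriv u2 with hu3d
  set u4 := deriv u3 with hu4d
  set u5 := deriv u4 with hu5d
  set v1 := deriv v with hv1d
  set v2 := deriv v1 with hv2d
  set v3 := deriv v2 with hv3d
  set v4 := deriv v3 with hv4d
  have hu1 : ContDiff ℝ (⊤ : ℕ∞) u1 := (contDiff_infty_iff_deriv.mp hu).2
  have hu2 : ContDiff ℝ (⊤ : ℕ∞) u2 := (contDiff_infty_iff_deriv.mp hu1).2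
  have hu3 : ContDiff ℝ (⊤ : ℕ∞) u3 := (contDiff_infty_iff_deriv.mp hu2).2
  have hu4 : ContDiff ℝ (⊤ : ℕ∞) u4 := (contDiff_infty_iff_deriv.mp hu3).2
  have hu5 : ContDiff ℝ (⊤ : ℕ∞) u5 := (contDiff_infty_iff_deriv.mp hu4).2
  have hv1 : ContDiff ℝ (⊤ : ℕ∞) v1 := (contDiff_infty_iff_deriv.mp hv).2
  have hv2 : ContDiff ℝ (⊤ : ℕ∞) v2 := (contDiff_infty_iff_deriv.mp hv1).2
  have hv3 : ContDiff ℝ (⊤ : ℕ∞) v3 := (contDiff_infty_iff_deriv.mp hv2).2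
  have hv4 : ContDiff ℝ (⊤ : ℕ∞) v4 := (contDiff_infty_iff_deriv.mp hv3).2
  have du : ∀ x, HasDerivAt u (u1 x) x := fun x => (hu.differentiable (by simp) x).hasDerivAt
  have du1 : ∀ x, HasDerivAt u1 (u2 x) x := fun x => (hu1.differentiable (by simp) x).hasDerivAt
  have du2 : ∀ x, HasDerivAt u2 (u3 x) x := fun x => (hu2.differentiable (by simp) x).hasDerivAt
  have du3 : ∀ x, HasDerivAt u3 (u4 x) x := fun x => (hu3.differentiable (by simp) x).hasDerivAt
  have du4 : ∀ x, HasDerivAt u4 (u5 x) x := fun x => (hu4.differentiable (by simp) x).hasDerivAt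
  have dv : ∀ x, HasDerivAt v (v1 x) x := fun x => (hv.differentiable (by simp) x).hasDerivAt
  have dv1 : ∀ x, HasDerivAt v1 (v2 x) x := fun x => (hv1.differentiable (by simp) x).hasDerivAt
  have dv2 : ∀ x, HasDerivAt v2 (v3 x) x := fun x => (hv2.differentiable (by simp) x).hasDerivAt
  have dv3 : ∀ x, HasDerivAt v3 (v4 x) x := fun x => (hv3.differentiable (by simp) x).hasDerivAt
  -- W levels
  have hW0 : ∀ x, HasDerivAt (fun y => u1 y + (u y)^2/6 + (v y)^2/3)
      (u2 x + u x*u1 x/3 + 2*v x*v1 x/3) x := by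
    intro x
    have h := ((du1 x).add (((du x).pow 2).div_const 6)).add (((dv x).pow 2).div_const 3)
    exact h.congr_deriv (by push_cast [id_eq]; ring)
  have hW1 : ∀ x, HasDerivAt (fun y => u2 y + u y*u1 y/3 + 2*v y*v1 y/3)
      (u3 x + (u1 x*u1 x + u x*u2 x)/3 + 2*(v1 x*v1 x + v x*v2 x)/3) x := by
    intro x
    have h := ((du2 x).add (((du x).mul (du1 x)).div_const 3)).add
      ((((dv x).const_mul 2).mul (dv1 x)).div_const 3)
    exact h.congr_deriv (by push_cast [id_eq]; ring)
  have hW2 : ∀ x, HasDerivAt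
      (fun y => u3 y + (u1 y*u1 y + u y*u2 y)/3 + 2*(v1 y*v1 y + v y*v2 y)/3)
      (u4 x + u1 x*u2 x + u x*u3 x/3 + 2*v1 x*v2 x + 2*v x*v3 x/3) x := by
    intro x
    have h := ((du3 x).add ((((du1 x).mul (du1 x)).add ((du x).mul (du2 x))).div_const 3)).add
      (((((dv1 x).mul (dv1 x)).add ((dv x).mul (dv2 x))).const_mul 2).div_const 3)
    exact h.congr_deriv (by push_cast [id_eq]; ring)
  have hW3 : ∀ x, HasDerivAt
      (fun y => u4 y + u1 y*u2 y + u y*u3 y/3 + 2*v1 y*v2 y + 2*v y*v3 y/3)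
      (u5 x + u2 x*u2 x + u1 x*u3 x + (u1 x*u3 x + u x*u4 x)/3
        + 2*(v2 x*v2 x + v1 x*v3 x) + 2*(v1 x*v3 x + v x*v4 x)/3) x := by
    intro x
    have h := (((((du4 x).add ((du1 x).mul (du2 x))).add
      (((du x).mul (du3 x)).div_const 3)).add
      (((dv1 x).const_mul 2).mul (dv2 x))).add
      ((((dv x).const_mul 2).mul (dv3 x)).div_const 3))
    exact h.congr_deriv (by push_cast [id_eq]; ring)
  -- G levels
  have dG0 : ∀ x, HasDerivAt
      (fun y => (y - y^3) * (u1 y + (u y)^2/6 + (v y)^2/3) - (1 + 3*y^2) * u y)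
      ((1-3*x^2)*(u1 x + (u x)^2/6 + (v x)^2/3)
        + (x-x^3)*(u2 x + u x*u1 x/3 + 2*v x*v1 x/3)
        - (6*x*u x + (1+3*x^2)*u1 x)) x := by
    intro x
    have h := ((((hasDerivAt_id x).sub (hasDerivAt_pow 3 x)).mul (hW0 x)).sub
      (((hasDerivAt_const x (1:ℝ)).add ((hasDerivAt_pow 2 x).const_mul 3)).mul (du x)))
    exact h.congr_deriv (by push_cast [id_eq, Pi.sub_apply, Pi.add_apply, Pi.mul_apply]; ring)
  have dG1 : ∀ x, HasDerivAt
      (fun y => (1-3*y^2)*(u1 y + (u y)^2/6 + (v y)^2/3)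
        + (y-y^3)*(u2 y + u y*u1 y/3 + 2*v y*v1 y/3)
        - (6*y*u y + (1+3*y^2)*u1 y))
      (-6*x*(u1 x + (u x)^2/6 + (v x)^2/3)
        + 2*(1-3*x^2)*(u2 x + u x*u1 x/3 + 2*v x*v1 x/3)
        + (x-x^3)*(u3 x + (u1 x*u1 x + u x*u2 x)/3 + 2*(v1 x*v1 x + v x*v2 x)/3)
        - (6*u x + 12*x*u1 x + (1+3*x^2)*u2 x)) x := by
    intro x
    have h := (((((hasDerivAt_const x (1:ℝ)).sub ((hasDerivAt_pow 2 x).const_mul 3)).mul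
        (hW0 x)).add
      (((hasDerivAt_id x).sub (hasDerivAt_pow 3 x)).mul (hW1 x))).sub
      ((((hasDerivAt_id x).const_mul 6).mul (du x)).add
        (((hasDerivAt_const x (1:ℝ)).add ((hasDerivAt_pow 2 x).const_mul 3)).mul (du1 x))))
    exact h.congr_deriv (by push_cast [id_eq, Pi.sub_apply, Pi.add_apply, Pi.mul_apply]; ring)
  have dG2 : ∀ x, HasDerivAt
      (fun y => -6*y*(u1 y + (u y)^2/6 + (v y)^2/3)
        + 2*(1-3*y^2)*(u2 y + u y*u1 y/3 + 2*v y*v1 y/3)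
        + (y-y^3)*(u3 y + (u1 y*u1 y + u y*u2 y)/3 + 2*(v1 y*v1 y + v y*v2 y)/3)
        - (6*u y + 12*y*u1 y + (1+3*y^2)*u2 y))
      (-6*(u1 x + (u x)^2/6 + (v x)^2/3)
        + -18*x*(u2 x + u x*u1 x/3 + 2*v x*v1 x/3)
        + 3*(1-3*x^2)*(u3 x + (u1 x*u1 x + u x*u2 x)/3 + 2*(v1 x*v1 x + v x*v2 x)/3)
        + (x-x^3)*(u4 x + u1 x*u2 x + u x*u3 x/3 + 2*v1 x*v2 x + 2*v x*v3 x/3)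
        - (18*u1 x + 18*x*u2 x + (1+3*x^2)*u3 x)) x := by
    intro x
    have t1 := ((hasDerivAt_id x).const_mul (-6)).mul (hW0 x)
    have t2 := ((((hasDerivAt_const x (1:ℝ)).sub ((hasDerivAt_pow 2 x).const_mul 3)).const_mul 2).mul (hW1 x))
    have t3 := (((hasDerivAt_id x).sub (hasDerivAt_pow 3 x)).mul (hW2 x))
    have s1 := (((du x).const_mul 6).add (((hasDerivAt_id x).const_mul 12).mul (du1 x))).add
        (((hasDerivAt_const x (1:ℝ)).add ((hasDerivAt_pow 2 x).const_mul 3)).mul (du2 x))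
    have h := ((t1.add t2).add t3).sub s1
    exact h.congr_deriv (by push_cast [id_eq, Pi.sub_apply, Pi.add_apply, Pi.mul_apply]; ring)
  have dG3 : ∀ x, HasDerivAt
      (fun y => -6*(u1 y + (u y)^2/6 + (v y)^2/3)
        + -18*y*(u2 y + u y*u1 y/3 + 2*v y*v1 y/3)
        + 3*(1-3*y^2)*(u3 y + (u1 y*u1 y + u y*u2 y)/3 + 2*(v1 y*v1 y + v y*v2 y)/3)
        + (y-y^3)*(u4 y + u1 y*u2 y + u y*u3 y/3 + 2*v1 y*v2 y + 2*v y*v3 y/3)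
        - (18*u1 y + 18*y*u2 y + (1+3*y^2)*u3 y))
      (-24*(u2 x + u x*u1 x/3 + 2*v x*v1 x/3)
        + -36*x*(u3 x + (u1 x*u1 x + u x*u2 x)/3 + 2*(v1 x*v1 x + v x*v2 x)/3)
        + 4*(1-3*x^2)*(u4 x + u1 x*u2 x + u x*u3 x/3 + 2*v1 x*v2 x + 2*v x*v3 x/3)
        + (x-x^3)*(u5 x + u2 x*u2 x + u1 x*u3 x + (u1 x*u3 x + u x*u4 x)/3
            + 2*(v2 x*v2 x + v1 x*v3 x) + 2*(v1 x*v3 x + v x*v4 x)/3)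
        - (36*u2 x + 24*x*u3 x + (1+3*x^2)*u4 x)) x := by
    intro x
    have t1 := (hW0 x).const_mul (-6)
    have t2 := (((hasDerivAt_id x).const_mul (-18)).mul (hW1 x))
    have t3 := ((((hasDerivAt_const x (1:ℝ)).sub ((hasDerivAt_pow 2 x).const_mul 3)).const_mul 3).mul (hW2 x))
    have t4 := (((hasDerivAt_id x).sub (hasDerivAt_pow 3 x)).mul (hW3 x))
    have s1 := (((du1 x).const_mul 18).add (((hasDerivAt_id x).const_mul 18).mul (du2 x))).add
        (((hasDerivAt_const x (1:ℝ)).add ((hasDerivAt_pow 2 x).const_mul 3)).mul (du3 x))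
    have h := (((t1.add t2).add t3).add t4).sub s1
    exact h.congr_deriv (by push_cast [id_eq, Pi.sub_apply, Pi.add_apply, Pi.mul_apply]; ring)
  -- vanishing chain on Ioo
  have hz0 : ∀ x ∈ Ioo (0:ℝ) δ,
      (fun y => (y - y^3) * (u1 y + (u y)^2/6 + (v y)^2/3) - (1 + 3*y^2) * u y) x = 0 := hG0
  have hz1 := zero_on_Ioo_deriv dG0 hz0
  have hz2 := zero_on_Ioo_deriv dG1 hz1
  have hz3 := zero_on_Ioo_deriv dG2 hz2
  have hz4 := zero_on_Ioo_deriv dG3 hz3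
  -- continuity of G2 and G4
  have cu : Continuous u := hu.continuous
  have cu1 : Continuous u1 := hu1.continuous
  have cu2 : Continuous u2 := hu2.continuous
  have cu3 : Continuous u3 := hu3.continuous
  have cu4 : Continuous u4 := hu4.continuous
  have cu5 : Continuous u5 := hu5.continuous
  have cv : Continuous v := hv.continuous
  have cv1 : Continuous v1 := hv1.continuous
  have cv2 : Continuous v2 := hv2.continuous
  have cv3 : Continuous v3 := hv3.continuous
  have cv4 : Continuous v4 := hv4.continuous
  have hG2_0 := zero_at_zero_of_zero_on_Ioo hδ0 (by fun_prop) hz2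
  have hG4_0 := zero_at_zero_of_zero_on_Ioo hδ0 (by fun_prop) hz4
  rw [hu0, hv0] at hG2_0 hG4_0
  have hA2 : u2 0 = 0 := by linear_combination hG2_0
  rw [hA2] at hG4_0
  show u4 0 = -(8/3) * v1 0 * v2 0
  linear_combination (1/3) * hG4_0

end BergerAux

/-- for smooth `y1, y2` on `[0, δ)` (realized as globally smooth functions)
with `y1'(0) = y2'(0) = 0` satisfying equation (E1) of the Berger Einstein ODE system on
`(0, δ)`, the fifth Taylor coefficient of `y1` at `0` equals
`−(4/15)·[y2]₂·[y2]₃`, where `[f]ₖ = f⁽ᵏ⁾(0)/k!`. -/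
theorem berger_y1_fifth_taylor_coeff (δ : ℝ) (hδ0 : 0 < δ) (hδ1 : δ ≤ 1)
    (y1 y2 : ℝ → ℝ)
    (hs1 : ContDiff ℝ (⊤ : ℕ∞) y1) (hs2 : ContDiff ℝ (⊤ : ℕ∞) y2)
    (h10 : deriv y1 0 = 0) (h20 : deriv y2 0 = 0)
    (hE1 : ∀ x ∈ Ioo (0:ℝ) δ,
      deriv (deriv y1) x + (1/6) * (deriv y1 x)^2 + (1/3) * (deriv y2 x)^2
        - x⁻¹ * (1 + 3*x^2) * (1 - x^2)⁻¹ * deriv y1 x = 0) :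
    iteratedDeriv 5 y1 0 / 120
      = -(4/15) * (iteratedDeriv 2 y2 0 / 2) * (iteratedDeriv 3 y2 0 / 6) := by
  set u := deriv y1 with hud
  set v := deriv y2 with hvd
  have hu : ContDiff ℝ (⊤ : ℕ∞) u := (contDiff_infty_iff_deriv.mp hs1).2
  have hv : ContDiff ℝ (⊤ : ℕ∞) v := (contDiff_infty_iff_deriv.mp hs2).2
  have hG0 : ∀ x ∈ Ioo (0:ℝ) δ,
      (x - x^3) * (deriv u x + (u x)^2/6 + (v x)^2/3) - (1 + 3*x^2) * u x = 0 := by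
    intro x hx
    have h := hE1 x hx
    have hx0 : x ≠ 0 := ne_of_gt hx.1
    have hx1 : (1:ℝ) - x^2 ≠ 0 := by nlinarith [hx.1, hx.2, hδ1]
    have h2 : deriv u x + (1/6)*(u x)^2 + (1/3)*(v x)^2
        = x⁻¹ * (1+3*x^2) * (1-x^2)⁻¹ * u x := by linarith
    have e1 : (x - x^3) * (deriv u x + (u x)^2/6 + (v x)^2/3)
        = (x*(1-x^2)) * (deriv u x + (1/6)*(u x)^2 + (1/3)*(v x)^2) := by ring
    have e2 : (x*(1-x^2)) * (x⁻¹ * (1+3*x^2) * (1-x^2)⁻¹ * u x) = (1+3*x^2) * u x := by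
      field_simp
    rw [e1, h2, e2, sub_self]
  have key := berger_key δ hδ0 u v hu hv h10 h20 hG0
  have e5 : iteratedDeriv 5 y1 = deriv (deriv (deriv (deriv u))) := by
    rw [iteratedDeriv_eq_iterate]; rfl
  have e2' : iteratedDeriv 2 y2 = deriv v := by
    rw [iteratedDeriv_eq_iterate]; rfl
  have e3' : iteratedDeriv 3 y2 = deriv (deriv v) := by
    rw [iteratedDeriv_eq_iterate]; rfl
  rw [e5, e2', e3', key]
  ring
end
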